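/- arXiv:1107.0264 — 4 statements merged into one kernel-verified Lean document; each statement's English description precedes it below -/
import Mathlib

section
/- Let G be an abelian group, ℤ[G] its integral group ring and I_G ⊆ ℤ[G] the augmentation ideal. Then there is a natural short exact sequence of ℤ[G]-modules 0 → I_G³ → I_G² → Sym²_ℤ(G) → 0, where I_G³ → I_G² is the inclusion, G acts trivially on Sym²_ℤ(G), and the surjection sends (g₁ − 1)(g₂ − 1) to the product g₁·g₂ in the symmetric square of G (G regarded as a ℤ-module). -/
noncomputable section
attribute [local instance] Classical.propDecidable

open scoped TensorProduct

variable (G : Type) [CommGroup G]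

/-- The augmentation ideal `I_G` of the integral group ring `ℤ[G]`. -/
def augIdeal : Ideal (MonoidAlgebra ℤ G) :=
  RingHom.ker ((MonoidAlgebra.lift ℤ ℤ G) 1).toRingHom

theorem gsub_mem (g : G) : MonoidAlgebra.of ℤ G g - 1 ∈ augIdeal G := by
  simp [augIdeal, RingHom.mem_ker, map_sub]

theorem gsubmul_mem (g₁ g₂ : G) :
    (MonoidAlgebra.of ℤ G g₁ - 1) * (MonoidAlgebra.of ℤ G g₂ - 1) ∈ (augIdeal G) ^ 2 := by
  rw [pow_two]
  exact Ideal.mul_mem_mul (gsub_mem G g₁) (gsub_mem G g₂)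

/-- `Sym²_ℤ(G)`: the second symmetric power of `G` as a `ℤ`-module, i.e. the quotient of
`G ⊗_ℤ G` by the subgroup generated by the elements `g₁ ⊗ g₂ - g₂ ⊗ g₁`. -/
def Sym2G : Type :=
  (Additive G ⊗[ℤ] Additive G) ⧸
    (Submodule.span ℤ {z : Additive G ⊗[ℤ] Additive G |
      ∃ x y : Additive G, z = x ⊗ₜ[ℤ] y - y ⊗ₜ[ℤ] x})

instance : AddCommGroup (Sym2G G) :=
  inferInstanceAs (AddCommGroup ((Additive G ⊗[ℤ] Additive G) ⧸
    (Submodule.span ℤ {z : Additive G ⊗[ℤ] Additive G |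
      ∃ x y : Additive G, z = x ⊗ₜ[ℤ] y - y ⊗ₜ[ℤ] x})))

instance : Module ℤ (Sym2G G) :=
  inferInstanceAs (Module ℤ ((Additive G ⊗[ℤ] Additive G) ⧸
    (Submodule.span ℤ {z : Additive G ⊗[ℤ] Additive G |
      ∃ x y : Additive G, z = x ⊗ₜ[ℤ] y - y ⊗ₜ[ℤ] x})))

def symRel : Submodule ℤ (Additive G ⊗[ℤ] Additive G) :=
  Submodule.span ℤ {z : Additive G ⊗[ℤ] Additive G |
      ∃ x y : Additive G, z = x ⊗ₜ[ℤ] y - y ⊗ₜ[ℤ] x}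

def mks : (Additive G ⊗[ℤ] Additive G) →ₗ[ℤ] Sym2G G := Submodule.mkQ (symRel G)

def sb2 : Additive G →ₗ[ℤ] Additive G →ₗ[ℤ] Sym2G G :=
  LinearMap.compr₂ (TensorProduct.mk ℤ (Additive G) (Additive G)) (mks G)

lemma sb2_symm (x y : Additive G) : sb2 G x y = sb2 G y x := by
  have : (mks G) (x ⊗ₜ[ℤ] y - y ⊗ₜ[ℤ] x) = 0 := by
    rw [← LinearMap.mem_ker]
    show _ ∈ LinearMap.ker (Submodule.mkQ (symRel G))
    rw [Submodule.ker_mkQ]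
    exact Submodule.subset_span ⟨x, y, rfl⟩
  have h2 : (mks G) (x ⊗ₜ[ℤ] y) - (mks G) (y ⊗ₜ[ℤ] x) = 0 := by rw [← map_sub]; exact this
  exact sub_eq_zero.mp h2

def c2 (n : ℤ) : ℤ := n * (n - 1) / 2

lemma two_c2 (n : ℤ) : 2 * c2 n = n * (n - 1) := by
  obtain ⟨k, hk⟩ := Int.even_mul_succ_self (n - 1)
  have h : n * (n - 1) = 2 * k := by rw [mul_comm]; simpa [sub_add_cancel, two_mul] using hk
  rw [c2, h, Int.mul_ediv_cancel_left _ two_ne_zero]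

lemma c2_add (a b : ℤ) : c2 (a + b) = c2 a + c2 b + a * b := by
  have h1 := two_c2 (a + b); have h2 := two_c2 a; have h3 := two_c2 b
  have key : (a + b) * (a + b - 1) = a * (a - 1) + b * (b - 1) + 2 * (a * b) := by ring
  rw [key, ← h2, ← h3] at h1
  linarith

lemma c2_zero : c2 0 = 0 := by decide
lemma c2_one : c2 1 = 0 := by decide
lemma c2_negone : c2 (-1) = 1 := by decide

/-- `p₁ : ℤ[G] → G` additively, sending `∑ n_g g` to `∑ n_g [g]`. -/
def pA : MonoidAlgebra ℤ G →ₗ[ℤ] Additive G :=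
  Finsupp.linearCombination ℤ (fun g : G => Additive.ofMul g) ∘ₗ
    (MonoidAlgebra.coeffLinearEquiv ℤ).toLinearMap

lemma pA_single (g : G) (n : ℤ) : pA G (MonoidAlgebra.single g n) = n • Additive.ofMul g := by
  exact Finsupp.linearCombination_single ℤ (v := fun g : G => Additive.ofMul g) n g

def eps : MonoidAlgebra ℤ G →ₐ[ℤ] ℤ := MonoidAlgebra.lift ℤ ℤ G 1

lemma eps_single (g : G) (n : ℤ) : eps G (MonoidAlgebra.single g n) = n := by
  simp [eps, MonoidAlgebra.lift_single]

def lo : LinearOrder G := IsWellOrder.linearOrder WellOrderingRel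
attribute [local instance] lo

/-- product of two group elements in `Sym²`. -/
def sg (g h : G) : Sym2G G := sb2 G (Additive.ofMul g) (Additive.ofMul h)

lemma sg_symm (g h : G) : sg G g h = sg G h g := sb2_symm G _ _

def thetaAux (S : Finset G) (f : MonoidAlgebra ℤ G) : Sym2G G :=
  (∑ g ∈ S, c2 (f.coeff g) • sg G g g) +
  ∑ g ∈ S, ∑ h ∈ S, if g < h then (f.coeff g * f.coeff h) • sg G g h else 0

def theta (f : MonoidAlgebra ℤ G) : Sym2G G := thetaAux G f.coeff.support f

lemma thetaAux_eq (S : Finset G) (f : MonoidAlgebra ℤ G) (h : f.coeff.support ⊆ S) :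
    thetaAux G S f = theta G f := by
  unfold theta thetaAux
  congr 1
  · refine (Finset.sum_subset h (fun g _ hg => ?_)).symm
    rw [Finsupp.notMem_support_iff.mp hg, c2_zero, zero_smul]
  · rw [← Finset.sum_subset h (fun g _ hg => Finset.sum_eq_zero (fun h' _ => by
      rw [Finsupp.notMem_support_iff.mp hg, zero_mul, zero_smul, ite_self]))]
    refine Finset.sum_congr rfl (fun g _ => ?_)
    refine (Finset.sum_subset h (fun h' _ hh' => ?_)).symm
    rw [Finsupp.notMem_support_iff.mp hh', mul_zero, zero_smul, ite_self]

lemma cross_eq (S : Finset G) (u v : MonoidAlgebra ℤ G) :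
    (∑ g ∈ S, ∑ h ∈ S, (u.coeff g * v.coeff h) • sg G g h) =
      (∑ g ∈ S, (u.coeff g * v.coeff g) • sg G g g) +
      ∑ g ∈ S, ∑ h ∈ S, (if g < h then ((u.coeff g * v.coeff h) + (u.coeff h * v.coeff g)) • sg G g h else 0) := by
  have tri : ∀ g h : G, (u.coeff g * v.coeff h) • sg G g h =
      (if g = h then (u.coeff g * v.coeff h) • sg G g h else 0) +
      ((if g < h then (u.coeff g * v.coeff h) • sg G g h else 0) +
       (if h < g then (u.coeff g * v.coeff h) • sg G g h else 0)) := by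
    intro g h
    rcases lt_trichotomy g h with hlt | heq | hgt
    · simp [hlt, ne_of_lt hlt, not_lt_of_gt hlt]
    · simp [heq, lt_irrefl]
    · simp [hgt, (ne_of_lt hgt).symm, not_lt_of_gt hgt]
  calc (∑ g ∈ S, ∑ h ∈ S, (u.coeff g * v.coeff h) • sg G g h)
      = (∑ g ∈ S, ∑ h ∈ S, (if g = h then (u.coeff g * v.coeff h) • sg G g h else 0)) +
        ((∑ g ∈ S, ∑ h ∈ S, (if g < h then (u.coeff g * v.coeff h) • sg G g h else 0)) +
         (∑ g ∈ S, ∑ h ∈ S, (if h < g then (u.coeff g * v.coeff h) • sg G g h else 0))) := by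
          rw [← Finset.sum_add_distrib]
          rw [← Finset.sum_add_distrib]
          refine Finset.sum_congr rfl fun g _ => ?_
          rw [← Finset.sum_add_distrib, ← Finset.sum_add_distrib]
          exact Finset.sum_congr rfl fun h _ => tri g h
    _ = (∑ g ∈ S, (u.coeff g * v.coeff g) • sg G g g) +
      ∑ g ∈ S, ∑ h ∈ S, (if g < h then ((u.coeff g * v.coeff h) + (u.coeff h * v.coeff g)) • sg G g h else 0) := by
          congr 1
          · refine Finset.sum_congr rfl fun g hg => ?_
            rw [Finset.sum_ite_eq S g (fun h => (u.coeff g * v.coeff h) • sg G g h), if_pos hg]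
          · rw [Finset.sum_comm (s := S) (t := S)
              (f := fun g h => (if h < g then (u.coeff g * v.coeff h) • sg G g h else 0))]
            rw [← Finset.sum_add_distrib]
            refine Finset.sum_congr rfl fun g _ => ?_
            rw [← Finset.sum_add_distrib]
            refine Finset.sum_congr rfl fun h _ => ?_
            by_cases hlt : g < h
            · rw [if_pos hlt, if_pos hlt, if_pos hlt, add_smul, sg_symm G h g]
            · rw [if_neg hlt, if_neg hlt, if_neg hlt, add_zero]

lemma thetaAux_add (S : Finset G) (u v : MonoidAlgebra ℤ G) :
    thetaAux G S (u + v) = thetaAux G S u + thetaAux G S v +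
      ∑ g ∈ S, ∑ h ∈ S, (u.coeff g * v.coeff h) • sg G g h := by
  unfold thetaAux
  rw [cross_eq G S u v]
  have diag : ∀ g : G, c2 ((u + v).coeff g) • sg G g g
      = c2 (u.coeff g) • sg G g g + c2 (v.coeff g) • sg G g g + (u.coeff g * v.coeff g) • sg G g g := by
    intro g
    rw [MonoidAlgebra.coeff_add, Finsupp.add_apply, c2_add, add_smul, add_smul]
  have crosspt : ∀ g h : G,
      (if g < h then ((u + v).coeff g * (u + v).coeff h) • sg G g h else 0)
      = (if g < h then (u.coeff g * u.coeff h) • sg G g h else 0)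
        + (if g < h then (v.coeff g * v.coeff h) • sg G g h else 0)
        + (if g < h then ((u.coeff g * v.coeff h) + (u.coeff h * v.coeff g)) • sg G g h else 0) := by
    intro g h
    by_cases hlt : g < h
    · rw [if_pos hlt, if_pos hlt, if_pos hlt, if_pos hlt,
        MonoidAlgebra.coeff_add, Finsupp.add_apply, Finsupp.add_apply, ← add_smul, ← add_smul]
      congr 1
      ring
    · simp [hlt]
  simp only [diag, crosspt, Finset.sum_add_distrib]
  abel

lemma pA_eq_sum (S : Finset G) (u : MonoidAlgebra ℤ G) (h : u.coeff.support ⊆ S) :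
    pA G u = ∑ g ∈ S, u.coeff g • Additive.ofMul g := by
  have : pA G u = u.coeff.sum fun g n => n • Additive.ofMul g :=
    Finsupp.linearCombination_apply ℤ u.coeff
  rw [this, Finsupp.sum]
  exact Finset.sum_subset h (fun g _ hg => by
    rw [Finsupp.notMem_support_iff.mp hg, zero_smul])

lemma cross_eq_sb2 (S : Finset G) (u v : MonoidAlgebra ℤ G)
    (hu : u.coeff.support ⊆ S) (hv : v.coeff.support ⊆ S) :
    (∑ g ∈ S, ∑ h ∈ S, (u.coeff g * v.coeff h) • sg G g h) = sb2 G (pA G u) (pA G v) := by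
  rw [pA_eq_sum G S u hu, pA_eq_sum G S v hv]
  simp only [map_sum, LinearMap.sum_apply, map_smul, LinearMap.smul_apply, Finset.smul_sum]
  rw [Finset.sum_comm]
  refine Finset.sum_congr rfl fun g _ => Finset.sum_congr rfl fun h _ => ?_
  rw [smul_smul, mul_comm]
  rfl

lemma theta_add (u v : MonoidAlgebra ℤ G) :
    theta G (u + v) = theta G u + theta G v + sb2 G (pA G u) (pA G v) := by
  set S := (u + v).coeff.support ∪ u.coeff.support ∪ v.coeff.support with hS
  have hu : u.coeff.support ⊆ S := fun g hg =>
    Finset.mem_union_left _ (Finset.mem_union_right _ hg)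
  have hv : v.coeff.support ⊆ S := fun g hg => Finset.mem_union_right _ hg
  have huv : (u + v).coeff.support ⊆ S := fun g hg =>
    Finset.mem_union_left _ (Finset.mem_union_left _ hg)
  rw [← thetaAux_eq G S _ huv, thetaAux_add G S u v, thetaAux_eq G S u hu,
    thetaAux_eq G S v hv, cross_eq_sb2 G S u v hu hv]

lemma theta_single (g : G) (n : ℤ) : theta G (MonoidAlgebra.single g n) = c2 n • sg G g g := by
  rw [← thetaAux_eq G {g} (MonoidAlgebra.single g n) Finsupp.support_single_subset]
  unfold thetaAux
  simp [MonoidAlgebra.coeff_single, Finsupp.single_eq_same]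

lemma theta_zero : theta G 0 = 0 := by
  have := theta_single G 1 0
  simpa [c2_zero] using this

lemma mem_aug_iff (x : MonoidAlgebra ℤ G) : x ∈ augIdeal G ↔ eps G x = 0 := by
  rw [augIdeal, RingHom.mem_ker]
  rfl

lemma eps_ofsub (g : G) : eps G (MonoidAlgebra.of ℤ G g - 1) = 0 := by
  rw [map_sub, map_one]
  have : eps G (MonoidAlgebra.of ℤ G g) = 1 := by
    rw [MonoidAlgebra.of_apply]
    exact eps_single G g 1
  rw [this, sub_self]

lemma pA_ofsub (g : G) : pA G (MonoidAlgebra.of ℤ G g - 1) = Additive.ofMul g := by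
  rw [map_sub, MonoidAlgebra.of_apply, MonoidAlgebra.one_def]
  have h1 : pA G (MonoidAlgebra.single (1 : G) (1 : ℤ)) = 0 := by
    rw [pA_single, one_smul, ofMul_one]
  have h2 : pA G (MonoidAlgebra.single g (1 : ℤ)) = Additive.ofMul g := by
    rw [pA_single, one_smul]
  rw [h1, h2, sub_zero]

lemma pA_mul (x y : MonoidAlgebra ℤ G) :
    pA G (x * y) = eps G x • pA G y + eps G y • pA G x := by
  induction x using MonoidAlgebra.induction_linear with
  | zero => simp
  | add f g hf hg =>
      rw [add_mul, map_add, map_add, map_add, hf, hg]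
      abel_nf
      simp [add_smul, smul_add]
      abel
  | single a b =>
      induction y using MonoidAlgebra.induction_linear with
      | zero => simp
      | add f g hf hg =>
          rw [mul_add, map_add, map_add, map_add, hf, hg]
          simp [add_smul, smul_add]
          abel
      | single c d =>
          rw [MonoidAlgebra.single_mul_single, pA_single, pA_single, pA_single, eps_single, eps_single]
          rw [ofMul_mul, smul_add, smul_smul, smul_smul, mul_comm d b]
          abel

def genSet : Set (MonoidAlgebra ℤ G) := {x | ∃ g : G, x = MonoidAlgebra.of ℤ G g - 1}

lemma eps_sum_support (x : MonoidAlgebra ℤ G) : eps G x = ∑ g ∈ x.coeff.support, x.coeff g := by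
  have : eps G x = x.coeff.sum fun g n => n • ((1 : G →* ℤ) g) := MonoidAlgebra.lift_apply 1 x
  rw [this, Finsupp.sum]
  refine Finset.sum_congr rfl fun g _ => ?_
  simp

lemma mem_closure_of_eps_zero (x : MonoidAlgebra ℤ G) (hx : eps G x = 0) :
    x ∈ AddSubgroup.closure (genSet G) := by
  have h1 : ∀ g : G, x.coeff g • (MonoidAlgebra.of ℤ G g - 1)
      = MonoidAlgebra.single g (x.coeff g) - x.coeff g • (1 : MonoidAlgebra ℤ G) := by
    intro g
    rw [smul_sub]
    congr 1
    rw [MonoidAlgebra.of_apply, MonoidAlgebra.smul_single', mul_one]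
  have hrep : x = ∑ g ∈ x.coeff.support, x.coeff g • (MonoidAlgebra.of ℤ G g - 1) := by
    rw [Finset.sum_congr rfl (fun g _ => h1 g), Finset.sum_sub_distrib, ← Finset.sum_smul,
      ← eps_sum_support, hx, zero_smul, sub_zero]
    exact (MonoidAlgebra.sum_coeff_single x).symm
  rw [hrep]
  exact AddSubgroup.sum_mem _ fun g _ =>
    AddSubgroup.zsmul_mem _ (AddSubgroup.subset_closure
      (show (MonoidAlgebra.of ℤ G g - 1) ∈ genSet G from ⟨g, rfl⟩)) _

lemma expand_prod (g h : G) :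
    (MonoidAlgebra.of ℤ G g - 1) * (MonoidAlgebra.of ℤ G h - 1) =
      ((MonoidAlgebra.single (g * h) (1 : ℤ) + MonoidAlgebra.single g (-1 : ℤ))
        + MonoidAlgebra.single h (-1 : ℤ)) + MonoidAlgebra.single 1 (1 : ℤ) := by
  have e1 : MonoidAlgebra.of ℤ G g * MonoidAlgebra.of ℤ G h
      = MonoidAlgebra.single (g * h) (1 : ℤ) := by
    rw [MonoidAlgebra.of_apply, MonoidAlgebra.of_apply, MonoidAlgebra.single_mul_single, mul_one]
  have e2 : ∀ a : G, MonoidAlgebra.single a (-1 : ℤ) = -MonoidAlgebra.of ℤ G a := by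
    intro a
    rw [MonoidAlgebra.of_apply]
    exact MonoidAlgebra.single_neg a 1
  rw [sub_mul, mul_sub, mul_sub, e1, e2, e2, one_mul, mul_one, MonoidAlgebra.one_def,
    MonoidAlgebra.single_mul_single]
  norm_num
  abel

lemma theta_prod (g h : G) :
    theta G ((MonoidAlgebra.of ℤ G g - 1) * (MonoidAlgebra.of ℤ G h - 1)) = - sg G g h := by
  rw [expand_prod, theta_add, theta_add, theta_add]
  rw [theta_single, theta_single, theta_single, theta_single]
  simp only [map_add, pA_single, c2_one, c2_negone, zero_smul, one_smul, neg_smul,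
    ofMul_mul, ofMul_one, smul_zero, map_neg, map_zero, LinearMap.add_apply,
    LinearMap.neg_apply, LinearMap.zero_apply, add_zero, zero_add, neg_neg]
  unfold sg
  rw [sb2_symm G (Additive.ofMul h) (Additive.ofMul g)]
  abel

lemma eps_closure (x : MonoidAlgebra ℤ G) (hx : x ∈ AddSubgroup.closure (genSet G)) :
    eps G x = 0 := by
  induction hx using AddSubgroup.closure_induction with
  | mem x hx => obtain ⟨g, rfl⟩ := hx; exact eps_ofsub G g
  | zero => exact map_zero _
  | add x y _ _ ihx ihy => rw [map_add, ihx, ihy, add_zero]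
  | neg x _ ihx => rw [map_neg, ihx, neg_zero]

lemma pA_mul_zero (a b : MonoidAlgebra ℤ G) (ha : eps G a = 0) (hb : eps G b = 0) :
    pA G (a * b) = 0 := by
  rw [pA_mul, ha, hb, zero_smul, zero_smul, add_zero]

lemma theta_add_of (u v : MonoidAlgebra ℤ G) (hu : pA G u = 0) :
    theta G (u + v) = theta G u + theta G v := by
  rw [theta_add, hu, map_zero, LinearMap.zero_apply, add_zero]

lemma theta_neg_of (z : MonoidAlgebra ℤ G) (hz : pA G z = 0) :
    theta G (-z) = - theta G z := by
  have h := theta_add G z (-z)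
  rw [add_neg_cancel, theta_zero, hz, map_zero, LinearMap.zero_apply, add_zero] at h
  exact (neg_eq_of_add_eq_zero_right h.symm).symm

lemma theta_mul_base (g : G) (b : MonoidAlgebra ℤ G)
    (hb : b ∈ AddSubgroup.closure (genSet G)) :
    theta G ((MonoidAlgebra.of ℤ G g - 1) * b)
      = - sb2 G (Additive.ofMul g) (pA G b) := by
  induction hb using AddSubgroup.closure_induction with
  | mem x hx =>
      obtain ⟨h, rfl⟩ := hx
      rw [theta_prod, pA_ofsub]
      rfl
  | zero => rw [mul_zero, theta_zero, map_zero, map_zero, neg_zero]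
  | add x y hx hy ihx ihy =>
      have hex := eps_closure G x hx
      have hey := eps_closure G y hy
      rw [mul_add, theta_add_of G _ _ (pA_mul_zero G _ _ (eps_ofsub G g) hex), ihx, ihy,
        map_add, map_add, neg_add]
  | neg x hx ihx =>
      have hex := eps_closure G x hx
      rw [mul_neg, theta_neg_of G _ (pA_mul_zero G _ _ (eps_ofsub G g) hex), ihx,
        map_neg, map_neg, neg_neg]


lemma theta_mul (a b : MonoidAlgebra ℤ G) (ha : eps G a = 0) (hb : eps G b = 0) :
    theta G (a * b) = - sb2 G (pA G a) (pA G b) := by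
  have hbc := mem_closure_of_eps_zero G b hb
  have hac := mem_closure_of_eps_zero G a ha
  induction hac using AddSubgroup.closure_induction with
  | mem x hx =>
      obtain ⟨g, rfl⟩ := hx
      rw [theta_mul_base G g b hbc, pA_ofsub]
  | zero => rw [zero_mul, theta_zero, map_zero, map_zero, LinearMap.zero_apply, neg_zero]
  | add x y hx hy ihx ihy =>
      have hex := eps_closure G x hx
      have hey := eps_closure G y hy
      rw [add_mul, theta_add_of G _ _ (pA_mul_zero G _ _ hex hb), ihx hex, ihy hey,
        map_add, map_add, LinearMap.add_apply, neg_add]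
  | neg x hx ihx =>
      have hex := eps_closure G x hx
      rw [neg_mul, theta_neg_of G _ (pA_mul_zero G _ _ hex hb), ihx hex,
        map_neg, map_neg, LinearMap.neg_apply, neg_neg]

lemma aug_sq_props (x : MonoidAlgebra ℤ G) (hx : x ∈ augIdeal G ^ 2) :
    eps G x = 0 ∧ pA G x = 0 := by
  rw [pow_two] at hx
  refine Submodule.mul_induction_on hx ?_ ?_
  · intro a ha b hb
    have hea : eps G a = 0 := (mem_aug_iff G a).mp ha
    have heb : eps G b = 0 := (mem_aug_iff G b).mp hb
    exact ⟨by rw [map_mul, hea, zero_mul], pA_mul_zero G a b hea heb⟩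
  · rintro x y ⟨hex, hpx⟩ ⟨hey, hpy⟩
    exact ⟨by rw [map_add, hex, hey, add_zero], by rw [map_add, hpx, hpy, add_zero]⟩

lemma theta_cube (x : MonoidAlgebra ℤ G) (hx : x ∈ augIdeal G ^ 3) :
    theta G x = 0 ∧ pA G x = 0 := by
  rw [pow_succ] at hx
  refine Submodule.mul_induction_on hx ?_ ?_
  · intro a ha b hb
    obtain ⟨hea, hpa⟩ := aug_sq_props G a ha
    have heb : eps G b = 0 := (mem_aug_iff G b).mp hb
    refine ⟨?_, pA_mul_zero G a b hea heb⟩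
    rw [theta_mul G a b hea heb, hpa, map_zero, LinearMap.zero_apply, neg_zero]
  · rintro x y ⟨htx, hpx⟩ ⟨hty, hpy⟩
    refine ⟨?_, by rw [map_add, hpx, hpy, add_zero]⟩
    rw [theta_add_of G x y hpx, htx, hty, add_zero]

def N3 : Submodule ℤ (MonoidAlgebra ℤ G) := Submodule.restrictScalars ℤ (augIdeal G ^ 3)

def mkN : MonoidAlgebra ℤ G →ₗ[ℤ] (MonoidAlgebra ℤ G ⧸ N3 G) := (N3 G).mkQ

lemma cube_mem (g₁ g₂ g₃ : G) :
    (MonoidAlgebra.of ℤ G g₁ - 1) * (MonoidAlgebra.of ℤ G g₂ - 1) *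
      (MonoidAlgebra.of ℤ G g₃ - 1) ∈ augIdeal G ^ 3 := by
  rw [pow_succ]
  refine Submodule.mul_mem_mul ?_ ?_
  · rw [pow_two]
    exact Submodule.mul_mem_mul ((mem_aug_iff G _).mpr (eps_ofsub G g₁))
      ((mem_aug_iff G _).mpr (eps_ofsub G g₂))
  · exact (mem_aug_iff G _).mpr (eps_ofsub G g₃)

def Ffun (a b : Additive G) : MonoidAlgebra ℤ G ⧸ N3 G :=
  mkN G ((MonoidAlgebra.of ℤ G a.toMul - 1) * (MonoidAlgebra.of ℤ G b.toMul - 1))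

lemma of_add_expand (a a' : Additive G) :
    (MonoidAlgebra.of ℤ G (a + a').toMul - 1) =
      (MonoidAlgebra.of ℤ G a.toMul - 1) + (MonoidAlgebra.of ℤ G a'.toMul - 1) +
        (MonoidAlgebra.of ℤ G a.toMul - 1) * (MonoidAlgebra.of ℤ G a'.toMul - 1) := by
  have : MonoidAlgebra.of ℤ G (a + a').toMul
      = MonoidAlgebra.of ℤ G a.toMul * MonoidAlgebra.of ℤ G a'.toMul := by
    rw [← map_mul]
    rfl
  rw [this]
  ring

lemma Ffun_add_left (a a' b : Additive G) :
    Ffun G (a + a') b = Ffun G a b + Ffun G a' b := by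
  unfold Ffun
  rw [of_add_expand, add_mul, add_mul, map_add, map_add]
  have : mkN G ((MonoidAlgebra.of ℤ G a.toMul - 1) * (MonoidAlgebra.of ℤ G a'.toMul - 1) *
      (MonoidAlgebra.of ℤ G b.toMul - 1)) = 0 := by
    rw [mkN, Submodule.mkQ_apply, Submodule.Quotient.mk_eq_zero]
    exact cube_mem G _ _ _
  rw [this, add_zero]

lemma Ffun_comm (a b : Additive G) : Ffun G a b = Ffun G b a := by
  unfold Ffun
  rw [mul_comm]

lemma Ffun_add_right (a b b' : Additive G) :
    Ffun G a (b + b') = Ffun G a b + Ffun G a b' := by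
  rw [Ffun_comm, Ffun_add_left, Ffun_comm G b a, Ffun_comm G b' a]

def Finner (a : Additive G) : Additive G →ₗ[ℤ] (MonoidAlgebra ℤ G ⧸ N3 G) :=
  (AddMonoidHom.mk' (Ffun G a) (Ffun_add_right G a)).toIntLinearMap

def Fouter : Additive G →ₗ[ℤ] (Additive G →ₗ[ℤ] (MonoidAlgebra ℤ G ⧸ N3 G)) :=
  (AddMonoidHom.mk' (Finner G) (by
    intro a a'
    ext b
    exact Ffun_add_left G a a' b)).toIntLinearMap

def Lmap : (Additive G ⊗[ℤ] Additive G) →ₗ[ℤ] (MonoidAlgebra ℤ G ⧸ N3 G) :=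
  TensorProduct.lift (Fouter G)

lemma Lmap_tmul (a b : Additive G) : Lmap G (a ⊗ₜ[ℤ] b) = Ffun G a b := rfl

def sigma : Sym2G G →ₗ[ℤ] (MonoidAlgebra ℤ G ⧸ N3 G) :=
  Submodule.liftQ (symRel G) (Lmap G) (by
    rw [symRel, Submodule.span_le]
    rintro z ⟨x, y, rfl⟩
    rw [SetLike.mem_coe, LinearMap.mem_ker, map_sub, Lmap_tmul, Lmap_tmul,
      Ffun_comm, sub_self])

lemma sigma_sb2 (x y : Additive G) : sigma G (sb2 G x y) = Ffun G x y := rfl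

lemma sigma_pA_base (g : G) (b : MonoidAlgebra ℤ G)
    (hb : b ∈ AddSubgroup.closure (genSet G)) :
    sigma G (sb2 G (Additive.ofMul g) (pA G b))
      = mkN G ((MonoidAlgebra.of ℤ G g - 1) * b) := by
  induction hb using AddSubgroup.closure_induction with
  | mem x hx =>
      obtain ⟨h, rfl⟩ := hx
      rw [pA_ofsub]
      exact sigma_sb2 G _ _
  | zero => rw [map_zero, map_zero, map_zero, mul_zero, map_zero]
  | add x y hx hy ihx ihy =>
      rw [map_add, map_add, map_add, ihx, ihy, mul_add, map_add]
  | neg x hx ihx =>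
      rw [map_neg, map_neg, map_neg, ihx, mul_neg, map_neg]

lemma sigma_pA (a b : MonoidAlgebra ℤ G)
    (ha : a ∈ AddSubgroup.closure (genSet G)) (hb : b ∈ AddSubgroup.closure (genSet G)) :
    sigma G (sb2 G (pA G a) (pA G b)) = mkN G (a * b) := by
  induction ha using AddSubgroup.closure_induction with
  | mem x hx =>
      obtain ⟨g, rfl⟩ := hx
      rw [pA_ofsub]
      exact sigma_pA_base G g b hb
  | zero => rw [map_zero, map_zero, LinearMap.zero_apply, map_zero, zero_mul, map_zero]
  | add x y hx hy ihx ihy =>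
      rw [map_add, map_add, LinearMap.add_apply, map_add, ihx, ihy, add_mul, map_add]
  | neg x hx ihx =>
      rw [map_neg, map_neg, LinearMap.neg_apply, map_neg, ihx, neg_mul, map_neg]

lemma sigma_theta (x : MonoidAlgebra ℤ G) (hx : x ∈ augIdeal G ^ 2) :
    sigma G (theta G x) = - mkN G x ∧ pA G x = 0 := by
  rw [pow_two] at hx
  refine Submodule.mul_induction_on hx ?_ ?_
  · intro a ha b hb
    have hea : eps G a = 0 := (mem_aug_iff G a).mp ha
    have heb : eps G b = 0 := (mem_aug_iff G b).mp hb
    refine ⟨?_, pA_mul_zero G a b hea heb⟩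
    rw [theta_mul G a b hea heb, map_neg,
      sigma_pA G a b (mem_closure_of_eps_zero G a hea) (mem_closure_of_eps_zero G b heb)]
  · rintro x y ⟨hsx, hpx⟩ ⟨hsy, hpy⟩
    refine ⟨?_, by rw [map_add, hpx, hpy, add_zero]⟩
    rw [theta_add_of G x y hpx, map_add, hsx, hsy, map_add, neg_add]

lemma theta_eq_zero_iff (x : MonoidAlgebra ℤ G) (hx : x ∈ augIdeal G ^ 2) :
    theta G x = 0 ↔ x ∈ augIdeal G ^ 3 := by
  constructor
  · intro h
    have hs := (sigma_theta G x hx).1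
    rw [h, map_zero] at hs
    have : mkN G x = 0 := by rw [← neg_eq_zero, ← hs]
    rw [mkN, Submodule.mkQ_apply, Submodule.Quotient.mk_eq_zero] at this
    exact this
  · intro h
    exact (theta_cube G x h).1

/-- For an abelian group `G`, there is a natural short exact sequence of
`ℤ[G]`-modules `0 → I_G³ → I_G² → Sym²_ℤ(G) → 0`, where the first map is the inclusion, `G`
acts trivially on `Sym²_ℤ(G)`, and the surjection sends `(g₁-1)(g₂-1)` to the product
`g₁·g₂` in the symmetric square.  (The surjection `π` is additive, `G`-equivariant for the
trivial action on the target, has kernel exactly `I_G³`, and takes the stated values on the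
products `(g₁-1)(g₂-1)`.) -/
theorem aug_ideal_sym2_ses (G : Type) [CommGroup G] :
    ∃ π : ↥((augIdeal G) ^ 2) →+ Sym2G G,
      Function.Surjective π ∧
      (∀ x : ↥((augIdeal G) ^ 2), π x = 0 ↔ (x : MonoidAlgebra ℤ G) ∈ (augIdeal G) ^ 3) ∧
      (∀ (g : G) (x : ↥((augIdeal G) ^ 2)),
        π ⟨MonoidAlgebra.of ℤ G g * (x : MonoidAlgebra ℤ G),
          Ideal.mul_mem_left _ _ x.2⟩ = π x) ∧
      (∀ g₁ g₂ : G,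
        π ⟨(MonoidAlgebra.of ℤ G g₁ - 1) * (MonoidAlgebra.of ℤ G g₂ - 1),
            gsubmul_mem G g₁ g₂⟩ =
          Submodule.Quotient.mk (Additive.ofMul g₁ ⊗ₜ[ℤ] Additive.ofMul g₂)) := by
  refine ⟨AddMonoidHom.mk' (fun x => - theta G (x : MonoidAlgebra ℤ G)) ?_, ?_, ?_, ?_, ?_⟩
  · intro x y
    have hpx := (aug_sq_props G (x : MonoidAlgebra ℤ G) x.2).2
    simp only [Submodule.coe_add]
    rw [theta_add_of G _ _ hpx, neg_add]
  · intro t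
    obtain ⟨z, rfl⟩ := Submodule.Quotient.mk_surjective _ t
    induction z using TensorProduct.induction_on with
    | zero =>
        refine ⟨0, ?_⟩
        show -theta G ((0 : ↥(augIdeal G ^ 2)) : MonoidAlgebra ℤ G) = _
        rw [ZeroMemClass.coe_zero, theta_zero, neg_zero]
        exact (Submodule.Quotient.mk_zero _).symm
    | tmul a b =>
        refine ⟨⟨(MonoidAlgebra.of ℤ G a.toMul - 1) * (MonoidAlgebra.of ℤ G b.toMul - 1),
          gsubmul_mem G _ _⟩, ?_⟩
        show -theta G _ = _
        rw [theta_prod, neg_neg]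
        rfl
    | add u v ihu ihv =>
        obtain ⟨xu, hxu⟩ := ihu
        obtain ⟨xv, hxv⟩ := ihv
        refine ⟨xu + xv, ?_⟩
        rw [map_add, hxu, hxv]
        exact (Submodule.Quotient.mk_add _).symm
  · intro x
    show -theta G (x : MonoidAlgebra ℤ G) = 0 ↔ _
    rw [neg_eq_zero]
    exact theta_eq_zero_iff G x x.2
  · intro g x
    have hx2 : ((x : MonoidAlgebra ℤ G)) ∈ augIdeal G ^ 2 := x.2
    have hcube : (MonoidAlgebra.of ℤ G g * (x : MonoidAlgebra ℤ G) - (x : MonoidAlgebra ℤ G))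
        ∈ augIdeal G ^ 3 := by
      have h : MonoidAlgebra.of ℤ G g * (x : MonoidAlgebra ℤ G) - (x : MonoidAlgebra ℤ G)
          = (x : MonoidAlgebra ℤ G) * (MonoidAlgebra.of ℤ G g - 1) := by ring
      rw [h, pow_succ]
      exact Submodule.mul_mem_mul hx2 (gsub_mem G g)
    show -theta G (MonoidAlgebra.of ℤ G g * (x : MonoidAlgebra ℤ G)) = -theta G _
    have h1 : MonoidAlgebra.of ℤ G g * (x : MonoidAlgebra ℤ G)
        = (MonoidAlgebra.of ℤ G g * (x : MonoidAlgebra ℤ G) - (x : MonoidAlgebra ℤ G))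
          + (x : MonoidAlgebra ℤ G) := by ring
    have hpz := (theta_cube G _ hcube).2
    rw [h1, theta_add_of G _ _ hpz, (theta_cube G _ hcube).1, zero_add]
  · intro g₁ g₂
    show -theta G _ = _
    rw [theta_prod, neg_neg]
    rfl

end
end

section
/- Let P be a set and, for n ≥ 1, let C_n be the free abelian group on the set of ordered n-tuples of distinct elements of P, with C₀ = ℤ; let d_n : C_n → C_{n−1} be given by d_n(x₁,…,x_n) = Σ_{i=1}^n (−1)^{i+1}(x₁,…,x̂ᵢ,…,x_n) for n ≥ 2 and d₁(x) = 1. Then the resulting chain complex C_• has H_n(C_•) = 0 for every n different from the cardinality of P; in particular, if P is infinite then C_• is acyclic (H_n(C_•) = 0 for all n ≥ 1 and H₀(C_•) ≅ ℤ via the identity). -/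
noncomputable section
attribute [local instance] Classical.propDecidable

open scoped TensorProduct

variable (P : Type)

/-- Ordered `n`-tuples of distinct points of `P`. -/
def DTup (n : ℕ) : Type := {f : Fin n → P // Function.Injective f}

/-- `C_n`: the free abelian group on ordered `n`-tuples of distinct points of `P`
(`C_0` is the free abelian group on the single empty tuple, i.e. a copy of `ℤ`). -/
def CC (n : ℕ) : Type := DTup P n →₀ ℤ

instance (n : ℕ) : AddCommGroup (CC P n) := inferInstanceAs (AddCommGroup (DTup P n →₀ ℤ))

/-- Deletion of the `i`-th entry of a tuple of distinct points. -/
def faceD (n : ℕ) (i : Fin (n + 1)) (t : DTup P (n + 1)) : DTup P n :=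
  ⟨t.1 ∘ Fin.succAbove i, t.2.comp (Fin.succAbove_right_injective)⟩

/-- The simplicial boundary map `d : C_{n+1} → C_n`,
`d(x₁,…,x_{n+1}) = Σ_{i} (-1)^{i+1} (x₁,…,x̂ᵢ,…,x_{n+1})`;  for `n = 0` it is the
augmentation `d₁(x) = 1` (under the identification `C₀ ≅ ℤ`). -/
def dd (n : ℕ) : CC P (n + 1) →ₗ[ℤ] CC P n :=
  Finsupp.lsum ℤ fun t =>
    ∑ i : Fin (n + 1), ((-1 : ℤ) ^ (i : ℕ)) • Finsupp.lsingle (faceD P n i t)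

lemma dd_single (n : ℕ) (t : DTup P (n+1)) :
    dd P n (Finsupp.single t 1) =
      ∑ i : Fin (n + 1), Finsupp.single (faceD P n i t) ((-1 : ℤ) ^ (i : ℕ)) := by
  rw [dd]
  erw [Finsupp.lsum_single, LinearMap.sum_apply]
  refine Finset.sum_congr rfl fun i _ => ?_
  erw [LinearMap.smul_apply, Finsupp.lsingle_apply, Finsupp.smul_single, smul_eq_mul, mul_one]

lemma val_succAbove {n : ℕ} (p : Fin (n+1)) (l : Fin n) :
    ((p.succAbove l : Fin (n+1)) : ℕ) = if (l : ℕ) < (p : ℕ) then (l : ℕ) else (l : ℕ) + 1 := by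
  rw [Fin.succAbove]
  split_ifs with h1 h2 h2 <;> simp_all [Fin.lt_def]

lemma succAbove_succAbove {n : ℕ} (i : Fin (n+2)) (j : Fin (n+1)) (h : (i : ℕ) ≤ (j : ℕ))
    (l : Fin n) :
    i.succAbove (j.succAbove l) =
      (⟨(j : ℕ) + 1, by omega⟩ : Fin (n+2)).succAbove ((⟨(i : ℕ), by omega⟩ : Fin (n+1)).succAbove l) := by
  apply Fin.ext
  rw [val_succAbove, val_succAbove, val_succAbove, val_succAbove]
  simp only [Fin.val_mk]
  split_ifs <;> omega

lemma faceD_faceD {n : ℕ} (i : Fin (n+2)) (j : Fin (n+1)) (h : (i : ℕ) ≤ (j : ℕ))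
    (t : DTup P (n+2)) :
    faceD P n j (faceD P (n+1) i t) =
      faceD P n ⟨(i : ℕ), by omega⟩ (faceD P (n+1) ⟨(j : ℕ) + 1, by omega⟩ t) := by
  apply Subtype.ext
  funext l
  exact congrArg t.1 (succAbove_succAbove i j h l)

lemma single_add_single_neg {α : Type*} (a : α) (k m : ℕ) (h : m = k + 1) :
    Finsupp.single a ((-1:ℤ)^k) + Finsupp.single a ((-1:ℤ)^m) = 0 := by
  subst h
  rw [← Finsupp.single_add, pow_succ]
  simp

lemma dd_dd (n : ℕ) (x : CC P (n+2)) : dd P n (dd P (n+1) x) = 0 := by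
  suffices h : ∀ t : DTup P (n+2), dd P n (dd P (n+1) (Finsupp.single t 1)) = 0 by
    have : (dd P n).comp (dd P (n+1)) = 0 := by
      apply Finsupp.lhom_ext
      intro a b
      have hb : (Finsupp.single a b : CC P (n+2)) = b • Finsupp.single a 1 := by
        rw [Finsupp.smul_single, smul_eq_mul, mul_one]
      erw [LinearMap.comp_apply, hb]
      erw [map_smul (dd P (n+1)) b (Finsupp.single a 1 : CC P (n+2)), map_smul (dd P n)]
      erw [h a]
      simp
      rfl
    exact DFunLike.congr_fun this x
  intro t
  erw [dd_single, map_sum]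
  have step : ∀ i : Fin (n+2), dd P n (Finsupp.single (faceD P (n+1) i t) ((-1:ℤ)^(i:ℕ)))
      = ∑ j : Fin (n+1), Finsupp.single (faceD P n j (faceD P (n+1) i t))
          ((-1:ℤ)^((i:ℕ)+(j:ℕ))) := by
    intro i
    have hb : (Finsupp.single (faceD P (n+1) i t) ((-1:ℤ)^(i:ℕ)) : CC P (n+1))
        = ((-1:ℤ)^(i:ℕ)) • Finsupp.single (faceD P (n+1) i t) 1 := by
      rw [Finsupp.smul_single, smul_eq_mul, mul_one]
    erw [hb, map_smul, dd_single, Finset.smul_sum (N := DTup P n →₀ ℤ)]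
    refine Finset.sum_congr rfl fun j _ => ?_
    rw [Finsupp.smul_single, smul_eq_mul, ← pow_add]
  simp only [step]
  erw [← Finset.sum_product']
  refine Finset.sum_ninvolution
    (fun q => if h : (q.1 : ℕ) ≤ (q.2 : ℕ)
      then ((⟨(q.2:ℕ)+1, by omega⟩ : Fin (n+2)), (⟨(q.1:ℕ), by omega⟩ : Fin (n+1)))
      else ((⟨(q.2:ℕ), by omega⟩ : Fin (n+2)), (⟨(q.1:ℕ)-1, by omega⟩ : Fin (n+1))))
    (fun q => ?_) (fun q _ => ?_) (fun q => Finset.mem_univ _) (fun q => ?_)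
  · by_cases h : (q.1 : ℕ) ≤ (q.2 : ℕ)
    · simp only [dif_pos h]
      rw [faceD_faceD P q.1 q.2 h t]
      exact single_add_single_neg _ _ _ (by omega)
    · simp only [dif_neg h]
      have h2 : ((⟨(q.2:ℕ), by omega⟩ : Fin (n+2)) : ℕ) ≤ ((⟨(q.1:ℕ)-1, by omega⟩ : Fin (n+1)) : ℕ) := by
        simp only [Fin.val_mk]; omega
      rw [faceD_faceD P _ _ h2 t]
      have e1 : (⟨((⟨(q.2:ℕ), by omega⟩ : Fin (n+2)) : ℕ), by omega⟩ : Fin (n+1)) = q.2 := by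
        apply Fin.ext; simp
      have e2 : (⟨((⟨(q.1:ℕ)-1, by omega⟩ : Fin (n+1)) : ℕ) + 1, by omega⟩ : Fin (n+2)) = q.1 := by
        apply Fin.ext; simp only [Fin.val_mk]; omega
      rw [e1, e2]
      erw [add_comm (Finsupp.single _ _ : DTup P n →₀ ℤ)]
      exact single_add_single_neg _ _ _ (by omega)
  · intro hgq
    beta_reduce at hgq
    by_cases h : (q.1 : ℕ) ≤ (q.2 : ℕ)
    · rw [dif_pos h, Prod.ext_iff, Fin.ext_iff, Fin.ext_iff] at hgq
      simp only [Fin.val_mk] at hgq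
      omega
    · rw [dif_neg h, Prod.ext_iff, Fin.ext_iff, Fin.ext_iff] at hgq
      simp only [Fin.val_mk] at hgq
      omega
  · beta_reduce
    by_cases h : (q.1 : ℕ) ≤ (q.2 : ℕ)
    · rw [dif_pos h]
      beta_reduce
      rw [dif_neg (by first | omega | (simp only [Fin.val_mk]; omega))]
      apply Prod.ext <;> apply Fin.ext <;> simp <;> omega
    · rw [dif_neg h]
      beta_reduce
      rw [dif_pos (by first | omega | (simp only [Fin.val_mk]; omega))]
      apply Prod.ext <;> apply Fin.ext <;> simp <;> omega

def consT (q : P) {k : ℕ} (t : DTup P k) (h : ∀ i, t.1 i ≠ q) : DTup P (k+1) :=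
  ⟨Fin.cons q t.1, Fin.cons_injective_of_injective (by rintro ⟨i, hi⟩; exact h i hi) t.2⟩

def sP (q : P) (k : ℕ) : CC P k →ₗ[ℤ] CC P (k+1) :=
  Finsupp.lsum ℤ fun t => if h : ∀ i, t.1 i ≠ q then Finsupp.lsingle (consT P q t h) else 0

lemma sP_single_avoid (q : P) (k : ℕ) (t : DTup P k) (h : ∀ i, t.1 i ≠ q) (c : ℤ) :
    sP P q k (Finsupp.single t c) = Finsupp.single (consT P q t h) c := by
  rw [sP]
  erw [Finsupp.lsum_single]
  erw [dif_pos h]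
  rfl

lemma sP_single_mem (q : P) (k : ℕ) (t : DTup P k) (h : ¬ ∀ i, t.1 i ≠ q) (c : ℤ) :
    sP P q k (Finsupp.single t c) = 0 := by
  rw [sP]
  erw [Finsupp.lsum_single]
  erw [dif_neg h]
  rfl

lemma face_cons_zero (q : P) {k : ℕ} (t : DTup P k) (h : ∀ i, t.1 i ≠ q) :
    faceD P k 0 (consT P q t h) = t := by
  apply Subtype.ext
  funext l
  show (Fin.cons q t.1 : Fin (k+1) → P) ((0 : Fin (k+1)).succAbove l) = t.1 l
  rw [Fin.succAbove_zero, Fin.cons_succ]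

lemma face_cons_succ (q : P) {k : ℕ} (t : DTup P (k+1)) (h : ∀ i, t.1 i ≠ q) (i : Fin (k+1)) :
    faceD P (k+1) i.succ (consT P q t h) =
      consT P q (faceD P k i t) (fun l => h (i.succAbove l)) := by
  apply Subtype.ext
  funext l
  show (Fin.cons q t.1 : Fin (k+2) → P) (i.succ.succAbove l) = (Fin.cons q (t.1 ∘ Fin.succAbove i) : Fin (k+1) → P) l
  induction l using Fin.cases with
  | zero => rw [Fin.succ_succAbove_zero, Fin.cons_zero, Fin.cons_zero]
  | succ j => rw [Fin.succ_succAbove_succ, Fin.cons_succ, Fin.cons_succ]; rfl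

lemma homotopy_avoid (q : P) (k : ℕ) (t : DTup P (k+1)) (h : ∀ i, t.1 i ≠ q) :
    dd P (k+1) (sP P q (k+1) (Finsupp.single t 1)) + sP P q k (dd P k (Finsupp.single t 1))
      = Finsupp.single t 1 := by
  erw [sP_single_avoid P q (k+1) t h, dd_single, dd_single, map_sum, Fin.sum_univ_succ]
  have e0 : Finsupp.single (faceD P (k+1) 0 (consT P q t h)) ((-1:ℤ)^((0 : Fin (k+2)):ℕ))
      = Finsupp.single t 1 := by rw [face_cons_zero]; norm_num
  erw [e0, add_assoc]
  have e1 : ∀ i : Fin (k+1),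
      Finsupp.single (faceD P (k+1) i.succ (consT P q t h)) ((-1:ℤ)^((i.succ : Fin (k+2)):ℕ))
        = Finsupp.single (consT P q (faceD P k i t) (fun l => h (i.succAbove l)))
            (-((-1:ℤ)^(i:ℕ))) := by
    intro i
    rw [face_cons_succ]
    congr 1
    rw [Fin.val_succ, pow_succ]
    ring
  have e2 : ∀ i : Fin (k+1),
      sP P q k (Finsupp.single (faceD P k i t) ((-1:ℤ)^(i:ℕ)))
        = Finsupp.single (consT P q (faceD P k i t) (fun l => h (i.succAbove l)))
            ((-1:ℤ)^(i:ℕ)) :=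
    fun i => sP_single_avoid P q k (faceD P k i t) (fun l => h (i.succAbove l)) _
  erw [Finset.sum_congr rfl (fun i _ => e1 i), Finset.sum_congr rfl (fun i _ => e2 i),
    ← Finset.sum_add_distrib]
  have : ∀ i : Fin (k+1),
      Finsupp.single (consT P q (faceD P k i t) (fun l => h (i.succAbove l))) (-((-1:ℤ)^(i:ℕ)))
        + Finsupp.single (consT P q (faceD P k i t) (fun l => h (i.succAbove l))) ((-1:ℤ)^(i:ℕ))
        = 0 := by
    intro i
    rw [← Finsupp.single_add]
    simp
  erw [Finset.sum_congr rfl (fun i _ => this i), Finset.sum_const_zero, add_zero]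

lemma face_avoid (q : P) {k : ℕ} (t : DTup P (k+1)) (j : Fin (k+1)) (hj : t.1 j = q) :
    ∀ l, (faceD P k j t).1 l ≠ q := by
  intro l hl
  exact Fin.succAbove_ne j l (t.2 (hl.trans hj.symm))

lemma homotopy_mem (q : P) (k : ℕ) (t : DTup P (k+1)) (j : Fin (k+1)) (hj : t.1 j = q) :
    dd P (k+1) (sP P q (k+1) (Finsupp.single t 1)) + sP P q k (dd P k (Finsupp.single t 1))
      = Finsupp.single (consT P q (faceD P k j t) (face_avoid P q t j hj)) ((-1:ℤ)^(j:ℕ)) := by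
  erw [sP_single_mem P q (k+1) t (by push_neg; exact ⟨j, hj⟩), map_zero, zero_add,
    dd_single, map_sum]
  rw [Finset.sum_eq_single j]
  · exact sP_single_avoid P q k (faceD P k j t) (face_avoid P q t j hj) _
  · intro i _ hij
    apply sP_single_mem
    push_neg
    obtain ⟨l, hl⟩ := Fin.exists_succAbove_eq (Ne.symm hij : j ≠ i)
    exact ⟨l, by show t.1 (i.succAbove l) = q; rw [hl, hj]⟩
  · intro hmem
    exact absurd (Finset.mem_univ j) hmem

def eP (q : P) : ∀ k, CC P k →ₗ[ℤ] CC P k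
  | 0 => LinearMap.id - (dd P 0).comp (sP P q 0)
  | (k+1) => LinearMap.id - (dd P (k+1)).comp (sP P q (k+1)) - (sP P q k).comp (dd P k)

lemma eP_apply (q : P) (k : ℕ) (x : CC P (k+1)) :
    eP P q (k+1) x = x - dd P (k+1) (sP P q (k+1) x) - sP P q k (dd P k x) := rfl

lemma dd_eP (q : P) (k : ℕ) (x : CC P (k+1)) :
    dd P k (eP P q (k+1) x) = eP P q k (dd P k x) := by
  rw [eP_apply, map_sub, map_sub, dd_dd, sub_zero]
  cases k with
  | zero => rfl
  | succ m =>
    rw [eP_apply, dd_dd, map_zero, sub_zero]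

lemma range_consT (q : P) {k : ℕ} (t : DTup P (k+1)) (j : Fin (k+1)) (hj : t.1 j = q) :
    Set.range (consT P q (faceD P k j t) (face_avoid P q t j hj)).1 = Set.range t.1 := by
  show Set.range (Fin.cons q (t.1 ∘ Fin.succAbove j) : Fin (k+1) → P) = _
  rw [Fin.range_cons, Set.range_comp, Fin.range_succAbove, ← hj]
  rw [Set.insert_eq, ← Set.image_singleton, ← Set.image_union, Set.union_compl_self,
    Set.image_univ]

lemma eP_single_support (q : P) (k : ℕ) (t : DTup P (k+1)) (u : DTup P (k+1))
    (hu : u ∈ (eP P q (k+1) (Finsupp.single t 1)).support) :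
    Set.range u.1 = Set.range t.1 ∧ q ∈ Set.range u.1 := by
  by_cases h : ∀ i, t.1 i ≠ q
  · exfalso
    have : eP P q (k+1) (Finsupp.single t 1) = 0 := by
      erw [eP_apply, sub_sub, homotopy_avoid P q k t h, sub_self]
    rw [this] at hu
    erw [Finsupp.support_zero] at hu
    simp at hu
  · push_neg at h
    obtain ⟨j, hj⟩ := h
    have he : eP P q (k+1) (Finsupp.single t 1) = Finsupp.single t 1
        - Finsupp.single (consT P q (faceD P k j t) (face_avoid P q t j hj)) ((-1:ℤ)^(j:ℕ)) := by
      erw [eP_apply, sub_sub, homotopy_mem P q k t j hj]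
      rfl
    rw [he] at hu
    have hu2 := Finsupp.support_sub hu
    rw [Finset.mem_union] at hu2
    have hq : q ∈ Set.range t.1 := ⟨j, hj⟩
    rcases hu2 with h1 | h2
    · have := Finsupp.support_single_subset h1
      rw [Finset.mem_singleton] at this
      subst this
      exact ⟨rfl, hq⟩
    · have := Finsupp.support_single_subset h2
      rw [Finset.mem_singleton] at this
      subst this
      rw [range_consT P q t j hj]
      exact ⟨rfl, hq⟩

lemma eP_support (q : P) (k : ℕ) (w : CC P (k+1)) (u : DTup P (k+1))
    (hu : u ∈ (eP P q (k+1) w).support) :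
    ∃ t ∈ w.support, Set.range u.1 = Set.range t.1 ∧ q ∈ Set.range u.1 := by
  have hw : eP P q (k+1) w = ∑ t ∈ w.support, ((show DTup P (k+1) →₀ ℤ from w) t) • eP P q (k+1) (Finsupp.single t 1) := by
    conv_lhs => erw [← Finsupp.sum_single w, Finsupp.sum, map_sum]
    refine Finset.sum_congr rfl fun t _ => ?_
    erw [← map_smul]
    congr 1
    erw [Finsupp.smul_single, smul_eq_mul, mul_one]
  rw [hw] at hu
  obtain ⟨t, ht, hut⟩ := Finsupp.mem_support_finset_sum u hu
  have := Finsupp.support_smul hut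
  obtain ⟨hr, hq⟩ := eP_single_support P q k t u this
  exact ⟨t, ht, hr, hq⟩


lemma main_rec (n : ℕ) (qs : List P) (x : CC P (n+1)) (hx : dd P n x = 0) :
    ∃ (y : CC P (n+2)) (z : CC P (n+1)), dd P (n+1) y + z = x ∧ dd P n z = 0 ∧
      ∀ u ∈ (show DTup P (n+1) →₀ ℤ from z).support, ∀ a ∈ qs, a ∈ Set.range u.1 := by
  induction qs with
  | nil => exact ⟨0, x, by rw [map_zero, zero_add], hx, by simp⟩
  | cons q qs ih =>
    obtain ⟨y, z, hyz, hz, hsupp⟩ := ih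
    refine ⟨y + sP P q (n+1) z, eP P q (n+1) z, ?_, ?_, ?_⟩
    · rw [map_add, eP_apply, hz, map_zero, sub_zero, ← hyz]
      abel
    · rw [dd_eP, hz, map_zero]
    · intro u hu a ha
      obtain ⟨t, ht, hr, hq⟩ := eP_support P q n z u hu
      rcases List.mem_cons.mp ha with rfl | h'
      · exact hq
      · rw [hr]
        exact hsupp t ht a h'

theorem distinct_tuples_complex_acyclic' (P : Type) :
    ((Finite P → Nat.card P ≠ 0) → Function.Surjective (dd P 0)) ∧
    (∀ n : ℕ, (Finite P → (n + 1 : ℕ) ≠ Nat.card P) →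
      ∀ x : CC P (n + 1), dd P n x = 0 → ∃ y : CC P (n + 2), dd P (n + 1) y = x) := by
  constructor
  · intro h1 c
    have hne : Nonempty P := by
      by_contra hP
      have hemp : IsEmpty P := not_nonempty_iff.mp hP
      haveI := hemp
      exact h1 inferInstance Nat.card_of_isEmpty
    obtain ⟨p⟩ := hne
    have hsub : Subsingleton (DTup P 0) := ⟨fun a b => Subtype.ext (funext fun i => i.elim0)⟩
    set t0 : DTup P 0 := ⟨fun i => i.elim0, fun i => i.elim0⟩ with ht0
    set tp : DTup P 1 := ⟨fun _ => p, fun a b _ => Subsingleton.elim a b⟩ with htp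
    refine ⟨(show DTup P 0 →₀ ℤ from c) t0 • Finsupp.single tp 1, ?_⟩
    erw [map_smul, dd_single]
    rw [Fin.sum_univ_one]
    have hface : faceD P 0 0 tp = t0 := Subsingleton.elim _ _
    rw [hface]
    apply Finsupp.ext
    intro a
    have ha : a = t0 := Subsingleton.elim _ _
    subst ha
    erw [Finsupp.smul_apply, Finsupp.single_eq_same]
    simp
  · intro n hcard x hx
    have key : ∀ s : Finset P, s.card = n + 2 → ∃ y : CC P (n+2), dd P (n+1) y = x := by
      intro s hs
      set g : Fin (n+2) → P := fun i => (s.equivFin.symm (Fin.cast hs.symm i)).1 with hgdef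
      have hg : Function.Injective g := by
        intro i i' h
        have := Subtype.coe_injective h
        have := s.equivFin.symm.injective this
        exact Fin.cast_injective _ this
      obtain ⟨y, z, hyz, hz, hsupp⟩ := main_rec P n (List.ofFn g) x hx
      have hz0 : z = 0 := by
        by_contra hzne
        have : ∃ u, u ∈ (show DTup P (n+1) →₀ ℤ from z).support := by
          rcases Finset.eq_empty_or_nonempty (show DTup P (n+1) →₀ ℤ from z).support with he | ⟨u, hu⟩
          · exact absurd (Finsupp.support_eq_empty.mp he) hzne
          · exact ⟨u, hu⟩
        obtain ⟨u, hu⟩ := this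
        have hmem : ∀ i : Fin (n+2), g i ∈ Set.range u.1 := by
          intro i
          exact hsupp u hu (g i) (by rw [List.mem_ofFn]; exact ⟨i, rfl⟩)
        set F : Fin (n+2) → Fin (n+1) := fun i => Classical.choose (hmem i) with hF
        have hFspec : ∀ i, u.1 (F i) = g i := fun i => Classical.choose_spec (hmem i)
        have hFinj : Function.Injective F := by
          intro i i' h
          apply hg
          rw [← hFspec, ← hFspec, h]
        have := Fintype.card_le_of_injective F hFinj
        simp at this
      rw [hz0, add_zero] at hyz
      exact ⟨y, hyz⟩
    by_cases hfin : Finite P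
    · have hcard' : Nat.card P ≠ n + 1 := fun h => hcard hfin h.symm
      have : Fintype P := Fintype.ofFinite P
      rcases le_or_gt (n+2) (Fintype.card P) with hle | hlt
      · obtain ⟨s, _, hs⟩ := Finset.exists_subset_card_eq
          (s := (Finset.univ : Finset P)) (n := n + 2) (by rw [Finset.card_univ]; exact hle)
        exact key s hs
      · -- card P ≤ n+1, and ≠ n+1, so card P ≤ n: no tuples
        have hcards : Fintype.card P ≤ n := by
          have := Nat.card_eq_fintype_card (α := P)
          omega
        have hemp : IsEmpty (DTup P (n+1)) := by
          constructor
          intro t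
          have := Fintype.card_le_of_injective t.1 t.2
          simp at this
          omega
        have hx0 : x = 0 := by
          apply Finsupp.ext
          intro a
          exact (hemp.false a).elim
        exact ⟨0, by rw [map_zero, hx0]⟩
    · have : Infinite P := not_finite_iff_infinite.mp hfin
      obtain ⟨s, hs⟩ := Infinite.exists_subset_card_eq P (n+2)
      exact key s hs

/-- The (augmented) complex `⋯ → C_n → C_{n-1} → ⋯ → C₁ → C₀ ≅ ℤ` of free
abelian groups on tuples of distinct points of `P` is exact in every degree different from
the cardinality of `P`; in particular it is acyclic when `P` is infinite. -/
theorem distinct_tuples_complex_acyclic (P : Type) :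
    ((Finite P → Nat.card P ≠ 0) → Function.Surjective (dd P 0)) ∧
    (∀ n : ℕ, (Finite P → (n + 1 : ℕ) ≠ Nat.card P) →
      ∀ x : CC P (n + 1), dd P n x = 0 → ∃ y : CC P (n + 2), dd P (n + 1) y = x) := by
  exact distinct_tuples_complex_acyclic' P
end
end

section
/- Let q = p^f be a prime power and let m, n ≥ 1 satisfy (p − 1)f > mn. Then there exists a ∈ 𝔽_q^× such that for every n-tuple (φ₁, …, φ_n) of (not necessarily distinct) elements of the Galois group Gal(𝔽_q/𝔽_p), one has ∏_{i=1}^{n} φᵢ(a^m) ≠ 1. -/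
noncomputable section
attribute [local instance] Classical.propDecidable

open scoped TensorProduct

open Finset in
lemma geom_sum_nat (p f : ℕ) (hp : 2 ≤ p) :
    ∑ j ∈ Finset.range f, (p - 1) * p ^ j = p ^ f - 1 := by
  induction f with
  | zero => simp
  | succ f ih =>
    rw [Finset.sum_range_succ, ih, pow_succ]
    have h1 : (p - 1) * p ^ f = p * p ^ f - p ^ f := by rw [Nat.sub_one_mul]
    have h2 : 1 ≤ p ^ f := Nat.one_le_pow _ _ (by omega)
    have h3 : p ^ f ≤ p * p ^ f := Nat.le_mul_of_pos_left _ (by omega)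
    rw [h1, mul_comm (p ^ f) p]
    omega

open Finset in
lemma key_not_dvd (p f : ℕ) (hp : 2 ≤ p) :
    ∀ N : ℕ, ∀ c : ℕ → ℕ, (∑ j ∈ range f, c j) = N → N < (p - 1) * f →
      0 < (∑ j ∈ range f, c j * p ^ j) →
      ¬ (p ^ f - 1) ∣ (∑ j ∈ range f, c j * p ^ j) := by
  intro N
  induction N using Nat.strong_induction_on with
  | _ N IH =>
    intro c hcN hNlt hSpos hdvd
    set S := ∑ j ∈ range f, c j * p ^ j with hSdef
    by_cases hbig : ∃ j ∈ range f, p ≤ c j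
    · obtain ⟨j, hjf, hcj⟩ := hbig
      have hjf' : j < f := mem_range.mp hjf
      have hfpos : 0 < f := lt_of_le_of_lt (Nat.zero_le j) hjf'
      set j₁ := (j + 1) % f with hj₁def
      have hj₁f : j₁ < f := Nat.mod_lt _ hfpos
      set c' : ℕ → ℕ := fun k => (if k = j then c k - p else c k) + (if k = j₁ then 1 else 0)
        with hc'def
      -- sum of c'
      have hsum1 : ∑ k ∈ range f, (if k = j then c k - p else c k)
          = N - p := by
        have : ∀ k ∈ range f, (if k = j then c k - p else c k)
            = c k - (if k = j then p else 0) := by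
          intro k _; split <;> simp
        rw [Finset.sum_congr rfl this, Finset.sum_tsub_distrib, hcN,
          Finset.sum_ite_eq' (range f) j (fun _ => p), if_pos hjf]
        intro k hk
        split
        · next h => subst h; exact hcj
        · exact Nat.zero_le _
      have hsum_c' : ∑ k ∈ range f, c' k = (N - p) + 1 := by
        simp only [hc'def]
        rw [Finset.sum_add_distrib, hsum1,
          Finset.sum_ite_eq' (range f) j₁ (fun _ => 1), if_pos (mem_range.mpr hj₁f)]
      -- sum of c' k * p ^ k
      have hple : p ^ (j + 1) ≤ S := by
        calc p ^ (j + 1) = p * p ^ j := by ring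
        _ ≤ c j * p ^ j := Nat.mul_le_mul_right _ hcj
        _ ≤ S := Finset.single_le_sum (f := fun k => c k * p ^ k) (fun k _ => Nat.zero_le _) hjf
      have hS' : ∑ k ∈ range f, c' k * p ^ k = (S - p ^ (j + 1)) + p ^ j₁ := by
        simp only [hc'def, add_mul]
        rw [Finset.sum_add_distrib]
        have e2 : ∑ k ∈ range f, (if k = j₁ then 1 else 0) * p ^ k = p ^ j₁ := by
          have : ∀ k ∈ range f, (if k = j₁ then 1 else 0) * p ^ k
              = (if k = j₁ then p ^ k else 0) := by intro k _; split <;> simp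
          rw [Finset.sum_congr rfl this,
            Finset.sum_ite_eq' (range f) j₁ (fun k => p ^ k), if_pos (mem_range.mpr hj₁f)]
        have e1 : ∑ k ∈ range f, (if k = j then c k - p else c k) * p ^ k
            = S - p ^ (j + 1) := by
          have : ∀ k ∈ range f, (if k = j then c k - p else c k) * p ^ k
              = c k * p ^ k - (if k = j then p ^ (k + 1) else 0) := by
            intro k _
            split
            · next h => subst h; rw [Nat.sub_mul, pow_succ, mul_comm (p ^ k) p]
            · simp
          rw [Finset.sum_congr rfl this, Finset.sum_tsub_distrib, ← hSdef,
            Finset.sum_ite_eq' (range f) j (fun k => p ^ (k + 1)), if_pos hjf]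
          intro k hk
          split
          · next h =>
            subst h
            calc p ^ (k + 1) = p * p ^ k := by ring
            _ ≤ c k * p ^ k := Nat.mul_le_mul_right _ hcj
          · exact Nat.zero_le _
        rw [e1, e2]
      -- divisibility transfer
      have hdvd' : (p ^ f - 1) ∣ ∑ k ∈ range f, c' k * p ^ k := by
        rw [hS']
        rcases Nat.lt_or_ge (j + 1) f with hlt | hge
        · have : j₁ = j + 1 := Nat.mod_eq_of_lt hlt
          rw [this, Nat.sub_add_cancel hple]
          exact hdvd
        · have hjeq : j + 1 = f := by omega
          have : j₁ = 0 := by rw [hj₁def, hjeq, Nat.mod_self]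
          rw [this, hjeq, pow_zero]
          have h1 : 1 ≤ p ^ f := Nat.one_le_pow _ _ (by omega)
          have : S - p ^ f + 1 = S - (p ^ f - 1) := by
            have := hjeq ▸ hple; omega
          rw [this]
          exact Nat.dvd_sub hdvd dvd_rfl
      have hpos' : 0 < ∑ k ∈ range f, c' k * p ^ k := by
        rw [hS']
        have : 0 < p ^ j₁ := Nat.pow_pos (by omega)
        omega
      have hNp : p ≤ N := le_trans hcj (hcN ▸ Finset.single_le_sum (fun k _ => Nat.zero_le _) hjf)
      exact IH (N - p + 1) (by omega) c' hsum_c' (by omega) hpos' hdvd'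
    · push_neg at hbig
      -- all digits ≤ p - 1; exists one < p - 1
      have hex : ∃ j ∈ range f, c j < p - 1 := by
        by_contra hno
        push_neg at hno
        have : (p - 1) * f ≤ N := by
          calc (p - 1) * f = ∑ _j ∈ range f, (p - 1) := by
                rw [Finset.sum_const, card_range, smul_eq_mul, mul_comm]
          _ ≤ ∑ j ∈ range f, c j := Finset.sum_le_sum hno
          _ = N := hcN
        omega
      obtain ⟨j0, hj0, hj0lt⟩ := hex
      have hSlt : S < p ^ f - 1 := by
        have : S < ∑ j ∈ range f, (p - 1) * p ^ j := by
          apply Finset.sum_lt_sum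
          · intro k hk
            exact Nat.mul_le_mul_right _ (by have := hbig k hk; omega)
          · refine ⟨j0, hj0, ?_⟩
            have hpow : 0 < p ^ j0 := Nat.pow_pos (by omega)
            exact Nat.mul_lt_mul_of_lt_of_le hj0lt (le_refl _) hpow
        rwa [geom_sum_nat p f hp] at this
      exact Nat.not_dvd_of_pos_of_lt hSpos hSlt hdvd

/-- Let `q = p^f` and `m, n ≥ 1` with `(p-1)f > mn`.  Then there exists
`a ∈ 𝔽_q^×` such that for every `n`-tuple `φ₁, …, φ_n` of elements of `Gal(𝔽_q/𝔽_p)` one has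
`∏ᵢ φᵢ(a^m) ≠ 1`. -/
theorem exists_unit_galois_product_ne_one (p f m n : ℕ) (hp : p.Prime) (hm : 1 ≤ m)
    (hn : 1 ≤ n) (hbound : m * n < (p - 1) * f)
    (F : Type) [Field F] [Fintype F] [Algebra (ZMod p) F]
    (hcard : Fintype.card F = p ^ f) :
    ∃ a : Fˣ, ∀ φ : Fin n → (F ≃ₐ[ZMod p] F), (∏ i, (φ i) ((a : F) ^ m)) ≠ 1 := by
  classical
  haveI : Fact p.Prime := ⟨hp⟩
  haveI : CharP F p := charP_of_injective_algebraMap' (ZMod p) p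
  have hp2 : 2 ≤ p := hp.two_le
  have hfpos : 0 < f := by
    rcases Nat.eq_zero_or_pos f with hf | hf
    · subst hf; simp at hbound
    · exact hf
  -- Frobenius as an AlgEquiv
  haveI : ExpChar F p := ExpChar.prime hp
  let φ₀ : F ≃ₐ[ZMod p] F := AlgEquiv.ofRingEquiv (f := frobeniusEquiv F p)
    (fun x => by
      simp only [frobeniusEquiv_apply, frobenius_def, ← map_pow, ZMod.pow_card])
  have hφ₀ : ∀ x : F, φ₀ x = x ^ p := fun x => rfl
  have hpowk : ∀ (k : ℕ) (x : F), (φ₀ ^ k) x = x ^ (p ^ k) := by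
    intro k
    induction k with
    | zero => intro x; simp
    | succ k ih =>
      intro x
      rw [pow_succ φ₀ k, AlgEquiv.mul_apply, hφ₀, ih, ← pow_mul, pow_succ p k,
        mul_comm (p ^ k) p]
  -- finrank and group card
  have hfinrank : Module.finrank (ZMod p) F = f := by
    have := Module.card_eq_pow_finrank (K := ZMod p) (V := F)
    rw [ZMod.card, hcard] at this
    exact (Nat.pow_right_injective hp2 this.symm)
  have hcardG : Fintype.card (F ≃ₐ[ZMod p] F) = f := by
    rw [← Nat.card_eq_fintype_card, IsGalois.card_aut_eq_finrank, hfinrank]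
  -- generator of units
  obtain ⟨g, hg⟩ := IsCyclic.exists_generator (α := Fˣ)
  have hog : orderOf g = p ^ f - 1 := by
    rw [orderOf_eq_card_of_forall_mem_zpowers hg, Nat.card_eq_fintype_card,
      Fintype.card_units, hcard]
  -- order of frobenius is f
  have hdvdf : orderOf φ₀ ∣ f := hcardG ▸ orderOf_dvd_card
  have hford : orderOf φ₀ = f := by
    refine Nat.le_antisymm (Nat.le_of_dvd hfpos hdvdf) ?_
    set d := orderOf φ₀ with hd
    have hd0 : 0 < d := orderOf_pos φ₀
    have h1 : (φ₀ ^ d) (g : F) = (g : F) := by rw [pow_orderOf_eq_one]; rfl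
    rw [hpowk] at h1
    have h2 : g ^ (p ^ d) = g ^ 1 := by
      ext; push_cast; rw [h1]; simp
    have h3 : orderOf g ∣ p ^ d - 1 := by
      have := (pow_eq_pow_iff_modEq.mp h2)
      exact (Nat.modEq_iff_dvd' (Nat.one_le_pow _ _ (by omega))).mp this.symm
    rw [hog] at h3
    have h4 : 0 < p ^ d - 1 := by
      have : p ^ 1 ≤ p ^ d := Nat.pow_le_pow_right (by omega) hd0
      simp at this; omega
    have h5 : p ^ f - 1 ≤ p ^ d - 1 := Nat.le_of_dvd h4 h3
    have h6 : p ^ f ≤ p ^ d := by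
      have : 1 ≤ p ^ f := Nat.one_le_pow _ _ (by omega)
      omega
    exact (Nat.pow_le_pow_iff_right hp2).mp h6
  -- every automorphism is a power of frobenius
  have hall : ∀ ψ : F ≃ₐ[ZMod p] F, ∃ k, k < f ∧ ∀ x : F, ψ x = x ^ (p ^ k) := by
    intro ψ
    have htop : Subgroup.zpowers φ₀ = ⊤ := by
      apply Subgroup.eq_top_of_card_eq
      rw [Nat.card_zpowers, hford, Nat.card_eq_fintype_card, hcardG]
    have hmem : ψ ∈ Submonoid.powers φ₀ := by
      rw [mem_powers_iff_mem_zpowers, htop]; trivial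
    obtain ⟨k, hk⟩ := hmem
    refine ⟨k % f, Nat.mod_lt _ hfpos, fun x => ?_⟩
    rw [← hk]
    show (φ₀ ^ k) x = x ^ p ^ (k % f)
    rw [← pow_mod_orderOf, hford, hpowk]
  -- main argument
  refine ⟨g, fun φ hprod => ?_⟩
  choose k hkf hkspec using fun i => hall (φ i)
  have hterm : ∀ i, (φ i) ((g : F) ^ m) = (g : F) ^ (m * p ^ (k i)) := by
    intro i
    rw [hkspec i, ← pow_mul]
  rw [Finset.prod_congr rfl (fun i _ => hterm i), Finset.prod_pow_eq_pow_sum] at hprod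
  set N := ∑ i : Fin n, m * p ^ (k i) with hN
  have hgN : g ^ N = 1 := by
    ext; push_cast; rw [hprod]
  have hdvdN : (p ^ f - 1) ∣ N := hog ▸ orderOf_dvd_of_pow_eq_one hgN
  classical
  set c : ℕ → ℕ := fun j => m * (Finset.univ.filter (fun i => k i = j)).card with hc
  have hmaps : ∀ i ∈ (Finset.univ : Finset (Fin n)), k i ∈ Finset.range f :=
    fun i _ => Finset.mem_range.mpr (hkf i)
  have h1 : ∑ j ∈ Finset.range f, c j = m * n := by
    simp only [hc]
    rw [← Finset.mul_sum, ← Finset.card_eq_sum_card_fiberwise hmaps,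
      Finset.card_univ, Fintype.card_fin]
  have h2 : ∑ j ∈ Finset.range f, c j * p ^ j = N := by
    rw [hN, ← Finset.sum_fiberwise_of_maps_to hmaps (fun i => m * p ^ (k i))]
    refine Finset.sum_congr rfl fun j _ => ?_
    rw [hc]
    have : ∀ i ∈ Finset.univ.filter (fun i => k i = j), m * p ^ (k i) = m * p ^ j := by
      intro i hi
      rw [(Finset.mem_filter.mp hi).2]
    rw [Finset.sum_congr rfl this, Finset.sum_const, smul_eq_mul]
    ring
  have h3 : 0 < N := by
    rw [hN]
    have : Nonempty (Fin n) := Fin.pos_iff_nonempty.mp (by omega)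
    exact Finset.sum_pos (fun i _ => by positivity) Finset.univ_nonempty
  exact key_not_dvd p f hp2 (m * n) c h1 hbound (h2 ▸ h3) (h2 ▸ hdvdN)
end
end

section
/- Let q = p^f be a prime power and let m, n ≥ 1 satisfy (p − 1)f > mn. Let 𝔽_q^× act on the additive group 𝔽_q by multiplication, and diagonally on the n-fold tensor power ⊗ⁿ_ℤ 𝔽_q and on the n-th exterior power Λⁿ_ℤ 𝔽_q. Then the subgroup of elements of ⊗ⁿ_ℤ 𝔽_q fixed by every element of (𝔽_q^×)^m (the subgroup of m-th powers) is zero, and likewise the subgroup of elements of Λⁿ_ℤ 𝔽_q fixed by every element of (𝔽_q^×)^m is zero. -/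
noncomputable section
attribute [local instance] Classical.propDecidable

open scoped TensorProduct

/-- Multiplication by `c` on the additive group of `F`, as a `ℤ`-linear map. -/
noncomputable def mulLin (F : Type) [Field F] (c : F) : F →ₗ[ℤ] F := LinearMap.mulLeft ℤ c


lemma geom_nat (p f : ℕ) : (p - 1) * (∑ u ∈ Finset.range f, p ^ u) = p ^ f - 1 := by
  induction f with
  | zero => simp
  | succ f ih =>
    rcases Nat.eq_zero_or_pos p with hp | hp
    · subst hp; simp
    · rw [Finset.sum_range_succ, Nat.mul_add, ih, pow_succ]
      have h1 : 1 ≤ p ^ f := Nat.one_le_pow _ _ hp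
      have h2 : p ^ f ≤ p ^ f * p := Nat.le_mul_of_pos_right _ hp
      have h3 : (p - 1) * p ^ f = p ^ f * p - p ^ f := by
        rw [Nat.sub_mul, one_mul, mul_comm]
      omega

lemma digit_lemma (p f m n : ℕ) (hp2 : 2 ≤ p) (hm : 1 ≤ m) (hn : 1 ≤ n)
    (hbound : m * n < (p - 1) * f) (i : Fin n → Fin f) :
    ¬ (p ^ f - 1 ∣ m * ∑ j, p ^ ((i j : ℕ))) := by
  intro hdvd
  have hf : 1 ≤ f := by
    by_contra h
    push_neg at h
    have : f = 0 := by omega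
    subst this
    simp at hbound
  haveI : NeZero f := ⟨by omega⟩
  have hpow2 : 2 ≤ p ^ f := le_trans hp2 (Nat.le_self_pow (by omega) p)
  have hq1 : 1 ≤ p ^ f - 1 := by omega
  haveI : NeZero (p ^ f - 1) := ⟨by omega⟩
  set q1 := p ^ f - 1 with hq1def
  have hpf1 : ((p : ZMod q1)) ^ f = 1 := by
    have h : ((p ^ f : ℕ) : ZMod q1) = ((q1 + 1 : ℕ) : ZMod q1) := by
      congr 1; omega
    push_cast at h
    rw [ZMod.natCast_self, zero_add] at h
    exact h
  have hmodpow : ∀ x : ℕ, (p : ZMod q1) ^ (x % f) = (p : ZMod q1) ^ x := by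
    intro x
    conv_rhs => rw [← Nat.div_add_mod x f]
    rw [pow_add, pow_mul, hpf1, one_pow, one_mul]
  set N : Fin f → ℕ := fun r => m * ∑ j, p ^ (((i j + r : Fin f) : ℕ)) with hN
  have h0 : ((m * ∑ j, p ^ ((i j : ℕ)) : ℕ) : ZMod q1) = 0 :=
    (ZMod.natCast_eq_zero_iff _ _).2 hdvd
  push_cast at h0
  have hNdvd : ∀ r, q1 ∣ N r := by
    intro r
    apply (ZMod.natCast_eq_zero_iff _ _).1
    rw [hN]
    push_cast
    have hterm : ∀ j : Fin n, (p : ZMod q1) ^ (((i j + r : Fin f) : ℕ)) =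
        (p : ZMod q1) ^ ((i j : ℕ)) * (p : ZMod q1) ^ ((r : ℕ)) := by
      intro j
      rw [Fin.val_add, hmodpow, pow_add]
    rw [Finset.sum_congr rfl (fun j _ => hterm j), ← Finset.sum_mul, ← mul_assoc, h0, zero_mul]
  have hNpos : ∀ r, 0 < N r := by
    intro r
    apply Nat.mul_pos (by omega)
    apply Finset.sum_pos
    · intro j _; exact Nat.pow_pos (by omega)
    · haveI : Nonempty (Fin n) := ⟨⟨0, by omega⟩⟩
      exact Finset.univ_nonempty
  have hNge : ∀ r, q1 ≤ N r := fun r => Nat.le_of_dvd (hNpos r) (hNdvd r)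
  have hsum : ∑ r, N r = m * n * ∑ u ∈ Finset.range f, p ^ u := by
    rw [hN]
    simp only [← Finset.mul_sum]
    rw [Finset.sum_comm]
    have hrow : ∀ j : Fin n, ∑ r : Fin f, p ^ (((i j + r : Fin f) : ℕ)) =
        ∑ u ∈ Finset.range f, p ^ u := by
      intro j
      rw [← Fin.sum_univ_eq_sum_range (fun u => p ^ u) f]
      exact Fintype.sum_equiv (Equiv.addLeft (i j)) _ _ (fun r => rfl)
    rw [Finset.sum_congr rfl (fun j _ => hrow j)]
    rw [Finset.sum_const, Finset.card_univ, Fintype.card_fin, smul_eq_mul]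
    ring
  have hlow : f * q1 ≤ ∑ r : Fin f, N r := by
    calc f * q1 = ∑ _r : Fin f, q1 := by
          rw [Finset.sum_const, Finset.card_univ, Fintype.card_fin, smul_eq_mul]
      _ ≤ _ := Finset.sum_le_sum fun r _ => hNge r
  rw [hsum] at hlow
  have hmul : (p - 1) * (f * q1) ≤ (p - 1) * (m * n * ∑ u ∈ Finset.range f, p ^ u) :=
    Nat.mul_le_mul_left _ hlow
  have heq : (p - 1) * (m * n * ∑ u ∈ Finset.range f, p ^ u) = m * n * q1 := by
    rw [hq1def, ← geom_nat p f]; ring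
  rw [heq, show (p - 1) * (f * q1) = (p - 1) * f * q1 by ring] at hmul
  have := Nat.le_of_mul_le_mul_right hmul (by omega : 0 < q1)
  omega


lemma natcast_pow_char_pow (p : ℕ) (hp : p.Prime) (F : Type) [Field F] [CharP F p]
    (c i : ℕ) : ((c ^ p ^ i : ℕ) : F) = (c : F) := by
  haveI : Fact p.Prime := ⟨hp⟩
  apply CharP.natCast_eq_natCast' F p
  have : ((c ^ p ^ i : ℕ) : ZMod p) = ((c : ℕ) : ZMod p) := by
    push_cast
    exact ZMod.pow_card_pow _
  exact (ZMod.natCast_eq_natCast_iff _ _ _).1 this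

lemma moore_inv (p f : ℕ) (hp : p.Prime) (hf : 1 ≤ f) (F : Type) [Field F] [Fintype F]
    (hcard : Fintype.card F = p ^ f) (hchar : CharP F p) (e : Fin f → F)
    (hgen : ∀ x : F, ∃ c : Fin f → ℕ, x = ∑ k, (c k) • e k) :
    ∃ B : Matrix (Fin f) (Fin f) F,
      B * (Matrix.of (fun i k => (e k) ^ p ^ (i : ℕ)) : Matrix (Fin f) (Fin f) F) = 1 := by
  classical
  haveI : Fact p.Prime := ⟨hp⟩
  set A : Matrix (Fin f) (Fin f) F := Matrix.of fun i k => (e k) ^ p ^ (i : ℕ) with hA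
  have hdet : A.det ≠ 0 := by
    intro hdet0
    obtain ⟨v, hv0, hvA⟩ := Matrix.exists_vecMul_eq_zero_iff.2 hdet0
    have hbasis : ∀ k, ∑ i, v i * (e k) ^ p ^ (i : ℕ) = 0 := by
      intro k
      have := congrFun hvA k
      simpa [Matrix.vecMul, dotProduct, hA] using this
    have hall : ∀ x : F, ∑ i, v i * x ^ p ^ (i : ℕ) = 0 := by
      intro x
      obtain ⟨c, rfl⟩ := hgen x
      have hxpow : ∀ i : Fin f, (∑ k, (c k) • e k) ^ p ^ (i : ℕ) =
          ∑ k, (c k) • (e k) ^ p ^ (i : ℕ) := by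
        intro i
        rw [sum_pow_char_pow]
        apply Finset.sum_congr rfl
        intro k _
        rw [nsmul_eq_mul, nsmul_eq_mul, mul_pow, ← Nat.cast_pow,
          natcast_pow_char_pow p hp F]
      calc ∑ i, v i * (∑ k, (c k) • e k) ^ p ^ (i : ℕ)
          = ∑ i, ∑ k, (c k) • (v i * (e k) ^ p ^ (i : ℕ)) := by
            apply Finset.sum_congr rfl
            intro i _
            rw [hxpow, Finset.mul_sum]
            apply Finset.sum_congr rfl
            intro k _
            rw [nsmul_eq_mul, nsmul_eq_mul]; ring
        _ = ∑ k, (c k) • (∑ i, v i * (e k) ^ p ^ (i : ℕ)) := by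
            rw [Finset.sum_comm]
            exact Finset.sum_congr rfl fun k _ => (Finset.smul_sum).symm
        _ = 0 := by
            apply Finset.sum_eq_zero
            intro k _
            rw [hbasis k, smul_zero]
    -- the Frobenius-power monoid homs are pairwise distinct
    have hdist : ∀ i j : Fin f, (i : ℕ) < (j : ℕ) →
        (powMonoidHom (p ^ (i : ℕ)) : F →* F) ≠ powMonoidHom (p ^ (j : ℕ)) := by
      intro i j hlt hij
      obtain ⟨g, hg⟩ := IsCyclic.exists_generator (α := Fˣ)
      have horder : orderOf g = p ^ f - 1 := by
        rw [orderOf_eq_card_of_forall_mem_zpowers hg, Nat.card_eq_fintype_card,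
          Fintype.card_units, hcard]
      have hgu : g ^ p ^ (i : ℕ) = g ^ p ^ (j : ℕ) := by
        ext
        push_cast
        have := congrArg (fun φ : F →* F => φ (g : F)) hij
        simpa [powMonoidHom] using this
      have hmod : p ^ (i : ℕ) ≡ p ^ (j : ℕ) [MOD p ^ f - 1] := by
        rw [← horder]
        exact (pow_eq_pow_iff_modEq).1 hgu
      have hle : p ^ (i : ℕ) ≤ p ^ (j : ℕ) := Nat.pow_le_pow_right hp.one_lt.le hlt.le
      have hdvd : p ^ f - 1 ∣ p ^ (j : ℕ) - p ^ (i : ℕ) := (Nat.modEq_iff_dvd' hle).1 hmod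
      have hposd : 0 < p ^ (j : ℕ) - p ^ (i : ℕ) := by
        have := Nat.pow_lt_pow_right hp.one_lt hlt
        omega
      have hj1 : p ^ (j : ℕ) ≤ p ^ (f - 1) := Nat.pow_le_pow_right hp.one_lt.le (by omega)
      have hpf : p ^ f = p ^ (f - 1) * p := by
        rw [← pow_succ]
        congr 1
        omega
      have hi1 : 1 ≤ p ^ (i : ℕ) := Nat.one_le_pow _ _ hp.pos
      have ha1 : 1 ≤ p ^ (f - 1) := Nat.one_le_pow _ _ hp.pos
      have hp2 : 2 ≤ p := hp.two_le
      have h2a : 2 * p ^ (f - 1) ≤ p ^ f := by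
        rw [hpf, mul_comm]
        exact Nat.mul_le_mul_left _ hp2
      have := Nat.le_of_dvd hposd hdvd
      omega
    have hinj : Function.Injective
        (fun i : Fin f => (powMonoidHom (p ^ (i : ℕ)) : F →* F)) := by
      intro i j hij
      rcases lt_trichotomy (i : ℕ) (j : ℕ) with h | h | h
      · exact absurd hij (hdist i j h)
      · exact Fin.ext h
      · exact absurd hij.symm (hdist j i h)
    have hLI : LinearIndependent F
        (fun i : Fin f => ((powMonoidHom (p ^ (i : ℕ)) : F →* F) : F → F)) :=
      (linearIndependent_monoidHom F F).comp _ hinj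
    have hvz : ∀ i, v i = 0 := by
      apply Fintype.linearIndependent_iff.1 hLI
      funext x
      simp only [Finset.sum_apply, Pi.smul_apply, Pi.zero_apply, smul_eq_mul, powMonoidHom_apply]
      exact hall x
    exact hv0 (funext hvz)
  exact ⟨A⁻¹, Matrix.nonsing_inv_mul A (isUnit_iff_ne_zero.2 hdet)⟩



lemma charp_of_card (p f : ℕ) (hp : p.Prime) (hf : 1 ≤ f) (F : Type) [Field F] [Fintype F]
    (hcard : Fintype.card F = p ^ f) : CharP F p := by
  obtain ⟨k, hrp, hck⟩ := FiniteField.card F (ringChar F)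
  have : p = ringChar F := by
    have hdvd : p ∣ ringChar F ^ (k : ℕ) := by
      rw [← hck, hcard]
      exact dvd_pow_self p (by omega)
    exact ((Nat.prime_dvd_prime_iff_eq hp hrp).1 (hp.dvd_of_dvd_pow hdvd))
  rw [this]
  exact ringChar.charP F


lemma key_sum_tprod (p f m n : ℕ) (hp : Nat.Prime p) (hm : 1 ≤ m) (hn : 1 ≤ n)
    (hbound : m * n < (p - 1) * f) (F : Type) [Field F] [Fintype F]
    (hcard : Fintype.card F = p ^ f) (x : Fin n → F) :
    ∑ b : Fˣ, (PiTensorProduct.tprod ℤ (fun _j : Fin n => ((b : F) ^ m) * x _j))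
      = (0 : ⨂[ℤ] (_ : Fin n), F) := by
  classical
  have hf : 1 ≤ f := by
    by_contra h
    push_neg at h
    have : f = 0 := by omega
    subst this
    simp at hbound
  haveI : Fact p.Prime := ⟨hp⟩
  haveI hchar : CharP F p := charp_of_card p f hp hf F hcard
  letI : Algebra (ZMod p) F := ZMod.algebra F p
  haveI : Module.Finite (ZMod p) F := Module.Finite.of_finite
  have hfr : Module.finrank (ZMod p) F = f := by
    have h1 : Fintype.card F = Fintype.card (ZMod p) ^ Module.finrank (ZMod p) F :=
      Module.card_eq_pow_finrank
    rw [ZMod.card, hcard] at h1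
    exact (Nat.pow_right_injective hp.two_le h1.symm)
  let e : Module.Basis (Fin f) (ZMod p) F := Module.finBasisOfFinrankEq (ZMod p) F hfr
  have hgen : ∀ y : F, ∃ c : Fin f → ℕ, y = ∑ k, (c k) • e k := by
    intro y
    refine ⟨fun k => (e.repr y k).val, ?_⟩
    conv_lhs => rw [← e.sum_repr y]
    refine Finset.sum_congr rfl fun k _ => ?_
    have : ((e.repr y k).val : ZMod p) = e.repr y k := by
      rw [ZMod.natCast_val, ZMod.cast_id]
    rw [← this, Nat.cast_smul_eq_nsmul]
  obtain ⟨B, hBA⟩ := moore_inv p f hp hf F hcard hchar e hgen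
  set A : Matrix (Fin f) (Fin f) F :=
    Matrix.of (fun i k => (e k) ^ p ^ (i : ℕ)) with hAdef
  -- the functionals
  let Frob : ℕ → (F →ₗ[ℤ] F) := fun i =>
    (iterateFrobenius F p i).toAddMonoidHom.toIntLinearMap
  let Ψ : (Fin n → Fin f) → ((⨂[ℤ] (_ : Fin n), F) →ₗ[ℤ] F) := fun iv =>
    PiTensorProduct.lift
      ((MultilinearMap.mkPiAlgebra ℤ (Fin n) F).compLinearMap (fun j => Frob ((iv j : ℕ))))
  have hΨt : ∀ (iv : Fin n → Fin f) (y : Fin n → F),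
      Ψ iv (PiTensorProduct.tprod ℤ y) = ∏ j, (y j) ^ p ^ ((iv j : ℕ)) := by
    intro iv y
    simp only [Ψ, PiTensorProduct.lift.tprod, MultilinearMap.compLinearMap_apply,
      MultilinearMap.mkPiAlgebra_apply, Frob, AddMonoidHom.coe_toIntLinearMap,
      RingHom.toAddMonoidHom_eq_coe, AddMonoidHom.coe_coe, iterateFrobenius_def]
  set w : ⨂[ℤ] (_ : Fin n), F :=
    ∑ b : Fˣ, (PiTensorProduct.tprod ℤ (fun _j : Fin n => ((b : F) ^ m) * x _j)) with hw
  have hΨw : ∀ iv : Fin n → Fin f, Ψ iv w = 0 := by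
    intro iv
    rw [hw, map_sum]
    have hterm : ∀ b : Fˣ,
        Ψ iv (PiTensorProduct.tprod ℤ (fun _j : Fin n => ((b : F) ^ m) * x _j)) =
          ((b : F)) ^ (m * ∑ j, p ^ ((iv j : ℕ))) * ∏ j, (x j) ^ p ^ ((iv j : ℕ)) := by
      intro b
      rw [hΨt]
      rw [show (fun j => (((b : F) ^ m) * x j) ^ p ^ ((iv j : ℕ)))
          = fun j => ((b : F)) ^ (m * p ^ ((iv j : ℕ))) * (x j) ^ p ^ ((iv j : ℕ)) by
        funext j
        rw [mul_pow, ← pow_mul]]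
      rw [Finset.prod_mul_distrib, Finset.prod_pow_eq_pow_sum, ← Finset.mul_sum]
    rw [Finset.sum_congr rfl (fun b _ => hterm b), ← Finset.sum_mul]
    have hzero : (∑ b : Fˣ, ((b : F)) ^ (m * ∑ j, p ^ ((iv j : ℕ)))) = 0 := by
      have := FiniteField.sum_pow_units F (m * ∑ j, p ^ ((iv j : ℕ)))
      rw [if_neg] at this
      · simpa [Units.val_pow_eq_pow_val] using this
      · rw [hcard]
        exact digit_lemma p f m n hp.two_le hm hn hbound iv
    rw [hzero, zero_mul]
  -- express w as an integer combination of basic tensors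
  set T : (Fin n → Fin f) → (⨂[ℤ] (_ : Fin n), F) :=
    fun κ => PiTensorProduct.tprod ℤ (fun j => e (κ j)) with hT
  have htp : ∀ y : Fin n → F,
      (PiTensorProduct.tprod ℤ y : ⨂[ℤ] (_ : Fin n), F) ∈ Submodule.span ℤ (Set.range T) := by
    intro y
    choose c hc using fun j => hgen (y j)
    have hy : y = fun j => ∑ k, ((c j k : ℤ)) • e k := by
      funext j
      rw [hc j]
      exact Finset.sum_congr rfl fun k _ => (natCast_zsmul _ _).symm
    rw [hy, MultilinearMap.map_sum]
    apply Submodule.sum_mem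
    intro κ _
    rw [MultilinearMap.map_smul_univ]
    exact Submodule.smul_mem _ _ (Submodule.subset_span ⟨κ, rfl⟩)
  have hwspan : w ∈ Submodule.span ℤ (Set.range T) := by
    rw [hw]
    exact Submodule.sum_mem _ fun b _ => htp _
  obtain ⟨d, hd⟩ := (Submodule.mem_span_range_iff_exists_fun ℤ).1 hwspan
  have hΨT : ∀ (iv κ : Fin n → Fin f), Ψ iv (T κ) = ∏ j, A (iv j) (κ j) := by
    intro iv κ
    rw [hT, hΨt]
    rfl
  have hrow : ∀ iv : Fin n → Fin f,
      ∑ κ, ((d κ : ℤ) : F) * ∏ j, A (iv j) (κ j) = 0 := by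
    intro iv
    have h1 : Ψ iv (∑ κ, d κ • T κ) = 0 := by rw [hd]; exact hΨw iv
    rw [map_sum] at h1
    calc ∑ κ, ((d κ : ℤ) : F) * ∏ j, A (iv j) (κ j)
        = ∑ κ, Ψ iv (d κ • T κ) := by
          refine Finset.sum_congr rfl fun κ _ => ?_
          rw [map_smul, hΨT, zsmul_eq_mul]
      _ = 0 := h1
  have hdzero : ∀ κ₀ : Fin n → Fin f, ((d κ₀ : ℤ) : F) = 0 := by
    intro κ₀
    have hδ : ∀ κ : Fin n → Fin f, ∏ j, (B * A) (κ₀ j) (κ j) = if κ = κ₀ then 1 else 0 := by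
      intro κ
      by_cases hκ : κ = κ₀
      · subst hκ
        rw [if_pos rfl, hBA]
        simp [Matrix.one_apply]
      · rw [if_neg hκ]
        obtain ⟨j, hj⟩ : ∃ j, κ₀ j ≠ κ j := by
          by_contra hcall
          push_neg at hcall
          exact hκ (funext fun j => (hcall j).symm)
        refine Finset.prod_eq_zero (Finset.mem_univ j) ?_
        rw [hBA, Matrix.one_apply, if_neg hj]
    have hstep : ∑ κ, ((d κ : ℤ) : F) * ∏ j, (B * A) (κ₀ j) (κ j) = ((d κ₀ : ℤ) : F) := by
      rw [Finset.sum_congr rfl (fun κ _ => by rw [hδ κ])]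
      simp
    have hexp : ∀ κ : Fin n → Fin f, ∏ j, (B * A) (κ₀ j) (κ j)
        = ∑ iv : Fin n → Fin f, ∏ j, B (κ₀ j) (iv j) * A (iv j) (κ j) := by
      intro κ
      simp only [Matrix.mul_apply]
      rw [Finset.prod_univ_sum]
      rw [Fintype.piFinset_univ]
    have hstep2 : ∑ κ, ((d κ : ℤ) : F) * ∏ j, (B * A) (κ₀ j) (κ j) = 0 := by
      calc ∑ κ, ((d κ : ℤ) : F) * ∏ j, (B * A) (κ₀ j) (κ j)
          = ∑ κ, ∑ iv : Fin n → Fin f, ((d κ : ℤ) : F) *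
              ((∏ j, B (κ₀ j) (iv j)) * (∏ j, A (iv j) (κ j))) := by
            refine Finset.sum_congr rfl fun κ _ => ?_
            rw [hexp κ, Finset.mul_sum]
            exact Finset.sum_congr rfl fun iv _ => by rw [Finset.prod_mul_distrib]
        _ = ∑ iv : Fin n → Fin f, (∏ j, B (κ₀ j) (iv j)) *
              ∑ κ, ((d κ : ℤ) : F) * ∏ j, A (iv j) (κ j) := by
            rw [Finset.sum_comm]
            refine Finset.sum_congr rfl fun iv _ => ?_
            rw [Finset.mul_sum]
            exact Finset.sum_congr rfl fun κ _ => by ring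
        _ = 0 := Finset.sum_eq_zero fun iv _ => by rw [hrow iv, mul_zero]
    rw [← hstep, hstep2]
  have hdvd : ∀ κ, (p : ℤ) ∣ d κ := fun κ => (CharP.intCast_eq_zero_iff F p (d κ)).1 (hdzero κ)
  have hpT : ∀ κ, (p : ℤ) • T κ = 0 := by
    intro κ
    have j0 : Fin n := ⟨0, by omega⟩
    have h1 := (PiTensorProduct.tprod ℤ (s := fun _ : Fin n => F)).map_update_smul
        (fun j => e (κ j)) j0 ((p : ℤ)) (e (κ j0))
    rw [Function.update_eq_self] at h1
    have h2 : (p : ℤ) • e (κ j0) = 0 := by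
      rw [zsmul_eq_mul]
      push_cast
      rw [CharP.cast_eq_zero F p, zero_mul]
    rw [h2] at h1
    rw [hT]
    rw [← h1, MultilinearMap.map_update_zero]
  rw [← hd]
  refine Finset.sum_eq_zero fun κ _ => ?_
  obtain ⟨t, ht⟩ := hdvd κ
  rw [ht, mul_comm, mul_smul, hpT κ, smul_zero]

/-- Let `q = p^f` and `m, n ≥ 1` with `(p-1)f > mn`.  For the diagonal
multiplication action of `𝔽_q^×` on the `n`-fold tensor power `⊗ⁿ_ℤ 𝔽_q` and on the `n`-th
exterior power `Λⁿ_ℤ 𝔽_q`, the subgroups of elements fixed by every `m`-th power are zero. -/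
theorem tensor_exterior_fixed_points_zero (p f m n : ℕ) (hp : p.Prime) (hm : 1 ≤ m)
    (hn : 1 ≤ n) (hbound : m * n < (p - 1) * f)
    (F : Type) [Field F] [Fintype F] (hcard : Fintype.card F = p ^ f) :
    (∀ x : ⨂[ℤ] (_ : Fin n), F,
      (∀ b : Fˣ, PiTensorProduct.map (fun _ => mulLin F ((b : F) ^ m)) x = x) → x = 0) ∧
    (∀ x : ↥(⋀[ℤ]^n F),
      (∀ b : Fˣ, ExteriorAlgebra.map (mulLin F ((b : F) ^ m)) (x : ExteriorAlgebra ℤ F) =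
        (x : ExteriorAlgebra ℤ F)) → x = 0) := by
  classical
  have hf : 1 ≤ f := by
    by_contra h
    push_neg at h
    have : f = 0 := by omega
    subst this
    simp at hbound
  haveI : Fact p.Prime := ⟨hp⟩
  haveI hchar : CharP F p := charp_of_card p f hp hf F hcard
  have hcardU : Fintype.card Fˣ = p ^ f - 1 := by rw [Fintype.card_units, hcard]
  have h2pf : 2 ≤ p ^ f := le_trans hp.two_le (Nat.le_self_pow (by omega) p)
  have hcop : Nat.Coprime p (p ^ f - 1) := by
    refine (Nat.Prime.coprime_iff_not_dvd hp).2 ?_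
    intro hdvd
    have h1 : p ∣ p ^ f := dvd_pow_self p (by omega)
    have h2 : p ∣ p ^ f - (p ^ f - 1) := Nat.dvd_sub h1 hdvd
    rw [show p ^ f - (p ^ f - 1) = 1 by omega] at h2
    have := Nat.dvd_one.1 h2
    have := hp.two_le
    omega
  -- Bezout combination
  have hcomb : ∀ {V : Type} [AddCommGroup V] (v : V),
      (p : ℤ) • v = 0 → ((p ^ f - 1 : ℕ) : ℤ) • v = 0 → v = 0 := by
    intro V _ v hpv hqv
    have hb := Nat.gcd_eq_gcd_ab p (p ^ f - 1)
    rw [hcop] at hb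
    have hb1 : (1 : ℤ) = (p : ℤ) * Nat.gcdA p (p ^ f - 1) +
        ((p ^ f - 1 : ℕ) : ℤ) * Nat.gcdB p (p ^ f - 1) := by exact_mod_cast hb
    have : v = ((1 : ℤ)) • v := (one_smul ℤ v).symm
    rw [this, hb1, add_smul, mul_comm, mul_smul, mul_comm, mul_smul, hpv, hqv,
      smul_zero, smul_zero, add_zero]
  constructor
  · -- tensor power part
    intro x hx
    have hS : ∀ v : ⨂[ℤ] (_ : Fin n), F,
        ∑ b : Fˣ, PiTensorProduct.map (fun _ => mulLin F ((b : F) ^ m)) v = 0 := by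
      intro v
      have hv : v ∈ (⊤ : Submodule ℤ (⨂[ℤ] (_ : Fin n), F)) := trivial
      rw [← PiTensorProduct.span_tprod_eq_top] at hv
      induction hv using Submodule.span_induction with
      | mem u hu =>
        obtain ⟨y, rfl⟩ := hu
        calc ∑ b : Fˣ, PiTensorProduct.map (fun _ => mulLin F ((b : F) ^ m))
              (PiTensorProduct.tprod ℤ y)
            = ∑ b : Fˣ, PiTensorProduct.tprod ℤ (fun j => ((b : F) ^ m) * y j) := by
              refine Finset.sum_congr rfl fun b _ => ?_
              rw [PiTensorProduct.map_tprod]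
              rfl
          _ = 0 := key_sum_tprod p f m n hp hm hn hbound F hcard y
      | zero => simp
      | add u u' hu hu' ihu ihu' =>
        simp only [map_add, Finset.sum_add_distrib, ihu, ihu', add_zero]
      | smul a u hu ihu =>
        simp only [map_smul, ← Finset.smul_sum, ihu, smul_zero]
    have hpt : ∀ v : ⨂[ℤ] (_ : Fin n), F, (p : ℤ) • v = 0 := by
      intro v
      have hv : v ∈ (⊤ : Submodule ℤ (⨂[ℤ] (_ : Fin n), F)) := trivial
      rw [← PiTensorProduct.span_tprod_eq_top] at hv
      induction hv using Submodule.span_induction with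
      | mem u hu =>
        obtain ⟨y, rfl⟩ := hu
        have j0 : Fin n := ⟨0, by omega⟩
        have h1 := (PiTensorProduct.tprod ℤ (s := fun _ : Fin n => F)).map_update_smul
            y j0 ((p : ℤ)) (y j0)
        rw [Function.update_eq_self] at h1
        have h2 : (p : ℤ) • y j0 = 0 := by
          rw [zsmul_eq_mul]
          push_cast
          rw [CharP.cast_eq_zero F p, zero_mul]
        rw [h2] at h1
        rw [← h1, MultilinearMap.map_update_zero]
      | zero => simp
      | add u u' hu hu' ihu ihu' => rw [smul_add, ihu, ihu', add_zero]
      | smul a u hu ihu => rw [smul_comm, ihu, smul_zero]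
    have h1 : ((p ^ f - 1 : ℕ) : ℤ) • x = 0 := by
      have h := hS x
      rw [Finset.sum_congr rfl (fun b _ => hx b), Finset.sum_const, Finset.card_univ,
        hcardU] at h
      rw [natCast_zsmul]
      exact h
    exact hcomb x (hpt x) h1
  · -- exterior power part
    intro x hx
    set μ : (⨂[ℤ] (_ : Fin n), F) →ₗ[ℤ] ExteriorAlgebra ℤ F :=
      PiTensorProduct.lift (ExteriorAlgebra.ιMulti ℤ n (M := F)).toMultilinearMap with hμ
    have hS : ∀ v ∈ (⋀[ℤ]^n F : Submodule ℤ (ExteriorAlgebra ℤ F)),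
        ∑ b : Fˣ, ExteriorAlgebra.map (mulLin F ((b : F) ^ m)) v = 0 := by
      intro v hv
      rw [← ExteriorAlgebra.ιMulti_span_fixedDegree] at hv
      induction hv using Submodule.span_induction with
      | mem u hu =>
        obtain ⟨y, rfl⟩ := hu
        calc ∑ b : Fˣ, ExteriorAlgebra.map (mulLin F ((b : F) ^ m))
              (ExteriorAlgebra.ιMulti ℤ n y)
            = ∑ b : Fˣ, μ (PiTensorProduct.tprod ℤ (fun j => ((b : F) ^ m) * y j)) := by
              refine Finset.sum_congr rfl fun b _ => ?_
              rw [ExteriorAlgebra.map_apply_ιMulti, hμ, PiTensorProduct.lift.tprod]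
              rfl
          _ = μ (∑ b : Fˣ, PiTensorProduct.tprod ℤ (fun j => ((b : F) ^ m) * y j)) :=
              (map_sum μ _ _).symm
          _ = 0 := by rw [key_sum_tprod p f m n hp hm hn hbound F hcard y, map_zero]
      | zero => simp
      | add u u' hu hu' ihu ihu' =>
        simp only [map_add, Finset.sum_add_distrib, ihu, ihu', add_zero]
      | smul a u hu ihu =>
        simp only [map_smul, ← Finset.smul_sum, ihu, smul_zero]
    have hpt : ∀ v ∈ (⋀[ℤ]^n F : Submodule ℤ (ExteriorAlgebra ℤ F)), (p : ℤ) • v = 0 := by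
      intro v hv
      rw [← ExteriorAlgebra.ιMulti_span_fixedDegree] at hv
      induction hv using Submodule.span_induction with
      | mem u hu =>
        obtain ⟨y, rfl⟩ := hu
        have j0 : Fin n := ⟨0, by omega⟩
        have h1 := (ExteriorAlgebra.ιMulti ℤ n (M := F)).toMultilinearMap.map_update_smul
            y j0 ((p : ℤ)) (y j0)
        rw [Function.update_eq_self] at h1
        have h2 : (p : ℤ) • y j0 = 0 := by
          rw [zsmul_eq_mul]
          push_cast
          rw [CharP.cast_eq_zero F p, zero_mul]
        rw [h2] at h1
        have h3 := (ExteriorAlgebra.ιMulti ℤ n (M := F)).toMultilinearMap.map_update_zero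
            y j0
        simp only [AlternatingMap.coe_multilinearMap] at h1 h3
        rw [← h1, h3]
      | zero => simp
      | add u u' hu hu' ihu ihu' => rw [smul_add, ihu, ihu', add_zero]
      | smul a u hu ihu => rw [smul_comm, ihu, smul_zero]
    have h1 : ((p ^ f - 1 : ℕ) : ℤ) • (x : ExteriorAlgebra ℤ F) = 0 := by
      have h := hS (x : ExteriorAlgebra ℤ F) x.2
      rw [Finset.sum_congr rfl (fun b _ => hx b), Finset.sum_const, Finset.card_univ,
        hcardU] at h
      rw [natCast_zsmul]
      exact h
    have h0 : (x : ExteriorAlgebra ℤ F) = 0 :=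
      hcomb (x : ExteriorAlgebra ℤ F) (hpt _ x.2) h1
    exact Subtype.ext h0
end
end
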